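/- arXiv:2308.11999 — 13 statements merged into one kernel-verified Lean document; each statement's English description precedes it below -/
import Mathlib

section
/- Let α ∈ (0,1) be a real number and n a positive integer. Let 0 = x_0 < x_1 < ⋯ < x_m be the distinct elements of the set { {iα} : 0 ≤ i ≤ n }, and consider the lengths of the m+1 subintervals [x_0,x_1), [x_1,x_2), …, [x_{m−1},x_m), [x_m,1) of [0,1). Then these lengths take at most three distinct values, and whenever exactly three distinct values occur, the largest value equals the sum of the other two. -/
private lemma tdt_fr1 (t : ℝ) (h0 : 0 ≤ t) (h1 : t < 1) : Int.fract t = t :=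
  Int.fract_eq_self.mpr ⟨h0, h1⟩

private lemma tdt_fr2 (t : ℝ) (h0 : -1 ≤ t) (h1 : t < 0) : Int.fract t = t + 1 := by
  have : Int.fract t = Int.fract (t + 1) := Int.fract_eq_fract.mpr ⟨-1, by push_cast; ring⟩
  rw [this, tdt_fr1 (t+1) (by linarith) (by linarith)]

private lemma tdt_fr3 (t : ℝ) (h0 : 1 ≤ t) (h1 : t < 2) : Int.fract t = t - 1 := by
  have : Int.fract t = Int.fract (t - 1) := Int.fract_eq_fract.mpr ⟨1, by push_cast; ring⟩
  rw [this, tdt_fr1 (t-1) (by linarith) (by linarith)]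

private lemma tdt_gAdd (α : ℝ) (i j : ℕ) :
    Int.fract (((i + j : ℕ) : ℝ) * α)
      = Int.fract (Int.fract ((i : ℝ) * α) + Int.fract ((j : ℝ) * α)) := by
  apply Int.fract_eq_fract.mpr
  refine ⟨⌊(i : ℝ) * α⌋ + ⌊(j : ℝ) * α⌋, ?_⟩
  simp only [Int.fract]
  push_cast
  ring

private lemma tdt_gSub (α : ℝ) {i j : ℕ} (h : j ≤ i) :
    Int.fract (((i - j : ℕ) : ℝ) * α)
      = Int.fract (Int.fract ((i : ℝ) * α) - Int.fract ((j : ℝ) * α)) := by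
  apply Int.fract_eq_fract.mpr
  refine ⟨⌊(i : ℝ) * α⌋ - ⌊(j : ℝ) * α⌋, ?_⟩
  have hc : ((i - j : ℕ) : ℝ) = (i : ℝ) - (j : ℝ) := by
    push_cast [h]; ring
  rw [hc]
  simp only [Int.fract]
  push_cast
  ring

/-- Core of the three-gap theorem: if no nonzero multiple up to `n₀` has zero
fractional part, every gap is one of `a`, `b`, `a+b`. -/
private lemma three_gap_core (α : ℝ) (n₀ : ℕ) (hn₀ : 1 ≤ n₀)
    (hnz : ∀ i : ℕ, 1 ≤ i → i ≤ n₀ → Int.fract ((i : ℝ) * α) ≠ 0) :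
    ∃ a b : ℝ, 0 < a ∧ 0 < b ∧
      ∀ x ∈ {x : ℝ | ∃ i : ℕ, i ≤ n₀ ∧ x = Int.fract ((i : ℝ) * α)},
        sInf ({y | y ∈ {x : ℝ | ∃ i : ℕ, i ≤ n₀ ∧ x = Int.fract ((i : ℝ) * α)} ∧ x < y} ∪ {1})
          - x ∈ ({a, b, a + b} : Set ℝ) := by
  set g : ℕ → ℝ := fun i => Int.fract ((i : ℝ) * α) with hg
  set S : Set ℝ := {x : ℝ | ∃ i : ℕ, i ≤ n₀ ∧ x = g i} with hS
  have hgge : ∀ i, 0 ≤ g i := fun i => Int.fract_nonneg _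
  have hglt : ∀ i, g i < 1 := fun i => Int.fract_lt_one _
  -- injectivity
  have inj : ∀ i j : ℕ, i ≤ n₀ → j ≤ n₀ → i < j → g i ≠ g j := by
    intro i j hi hj hij heq
    have h1 : g (j - i) = Int.fract (g j - g i) := tdt_gSub α (le_of_lt hij)
    rw [← heq] at h1
    simp at h1
    exact hnz (j - i) (by omega) (by omega) h1
  -- min and max
  obtain ⟨p, hpmem, hpmin⟩ := Finset.exists_min_image (Finset.Icc 1 n₀) g
    ⟨1, by simp [hn₀]⟩
  obtain ⟨q, hqmem, hqmax⟩ := Finset.exists_max_image (Finset.Icc 1 n₀) g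
    ⟨1, by simp [hn₀]⟩
  simp only [Finset.mem_Icc] at hpmem hqmem
  simp only [Finset.mem_Icc] at hpmin hqmax
  set a : ℝ := g p with ha
  set B : ℝ := g q with hB
  have ha0 : 0 < a := lt_of_le_of_ne (hgge p) (Ne.symm (hnz p hpmem.1 hpmem.2))
  have haB : a ≤ B := hqmax p hpmem
  have hB0 : 0 < B := lt_of_lt_of_le ha0 haB
  have hB1 : B < 1 := hglt q
  set b : ℝ := 1 - B with hb
  have hb0 : 0 < b := by simp [hb]; linarith
  have minpos : ∀ j, 1 ≤ j → j ≤ n₀ → a ≤ g j := fun j h1 h2 => hpmin j ⟨h1, h2⟩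
  have maxall : ∀ j, j ≤ n₀ → g j ≤ B := by
    intro j hj
    rcases Nat.eq_zero_or_pos j with h | h
    · subst h
      have : g 0 = 0 := by simp [hg]
      rw [this]; exact le_of_lt hB0
    · exact hqmax j ⟨h, hj⟩
  refine ⟨a, b, ha0, hb0, ?_⟩
  rintro x ⟨i, hin, rfl⟩
  set T : Set ℝ := {y | y ∈ S ∧ g i < y} ∪ {1} with hT
  have hSfin : S.Finite := by
    apply Set.Finite.subset ((Set.finite_Iic n₀).image g)
    rintro x ⟨j, hj, rfl⟩
    exact ⟨j, hj, rfl⟩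
  have hTfin : T.Finite := by
    apply Set.Finite.union _ (Set.finite_singleton 1)
    exact hSfin.subset (fun y hy => hy.1)
  have hTne : T.Nonempty := ⟨1, Or.inr rfl⟩
  have hInf : ∀ z : ℝ, z ∈ T → (∀ w ∈ T, z ≤ w) → sInf T = z := by
    intro z hz hlb
    exact le_antisymm (csInf_le hTfin.bddBelow hz) (le_csInf hTne hlb)
  -- case analysis
  rcases le_or_gt (i + p) n₀ with hc1 | hc1
  · -- case 1: gap a
    have hkey : g (i + p) = g i + a := by
      have h1 : g (i + p) = Int.fract (g i + a) := tdt_gAdd α i p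
      rcases lt_or_ge (g i + a) 1 with h | h
      · rw [h1, tdt_fr1 _ (by have := hgge i; linarith) h]
      · exfalso
        have h2 : a ≤ g (i + p) := minpos (i + p) (by omega) hc1
        rw [h1, tdt_fr3 _ h (by have := hglt i; linarith)] at h2
        have := hglt i
        linarith
    have hz1 : g i + a < 1 := by rw [← hkey]; exact hglt (i + p)
    have := hInf (g i + a) (Or.inl ⟨⟨i + p, hc1, hkey.symm⟩, by linarith⟩) ?_
    · rw [this]; left; ring
    · rintro w (⟨⟨j, hj, rfl⟩, hxw⟩ | hw1)
      · by_contra h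
        push_neg at h
        rcases lt_trichotomy i j with hij | hij | hij
        · have h1 : g (j - i) = Int.fract (g j - g i) := tdt_gSub α (le_of_lt hij)
          rw [tdt_fr1 _ (by linarith) (by linarith)] at h1
          have := minpos (j - i) (by omega) (by omega)
          linarith
        · subst hij; linarith
        · have h1 : g (i + p - j) = Int.fract (g (i + p) - g j) := tdt_gSub α (by omega)
          rw [hkey, tdt_fr1 _ (by linarith) (by linarith)] at h1
          have := minpos (i + p - j) (by omega) (by omega)
          linarith
      · simp only [Set.mem_singleton_iff] at hw1
        rw [hw1]; linarith
  · rcases lt_or_ge i q with hc2 | hc3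
    · -- case 2: gap a + b
      have hiq : g i < B := lt_of_le_of_ne (maxall i hin) (inj i q hin hqmem.2 hc2)
      have hqi : g (q - i) = B - g i := by
        have h1 : g (q - i) = Int.fract (B - g i) := tdt_gSub α (le_of_lt hc2)
        rw [h1, tdt_fr1 _ (by linarith) (by have := hgge i; linarith)]
      have hxle : g i + a + b ≤ 1 := by
        have := minpos (q - i) (by omega) (by omega)
        rw [hqi] at this
        simp only [hb]; linarith
      have hm1 : 1 ≤ i + p - q := by omega
      have hm2 : i + p - q ≤ n₀ := by omega
      have hkey : g (i + p - q) = g i + a + b := by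
        have h1 : g (i + p - q) = Int.fract (g (i + p) - B) := tdt_gSub α (by omega)
        have h2 : g (i + p) = Int.fract (g i + a) := tdt_gAdd α i p
        have h3 : Int.fract (g (i + p) - B) = Int.fract (g i + a - B) := by
          apply Int.fract_eq_fract.mpr
          refine ⟨-⌊g i + a⌋, ?_⟩
          rw [h2]
          simp only [Int.fract]
          push_cast
          ring
        rw [h1, h3]
        have hs : g i + a - B = g i + a + b - 1 := by simp [hb]; ring
        rcases eq_or_lt_of_le hxle with he | hl
        · exfalso
          have h0 : g i + a - B = 0 := by simp only [hb] at he ⊢; linarith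
          have h4 : g (i + p - q) = 0 := by rw [h1, h3, h0, Int.fract_zero]
          exact hnz (i + p - q) hm1 hm2 h4
        · rw [tdt_fr2 _ (by have := hgge i; linarith) (by linarith)]
          simp [hb]; ring
      have hz1 : g i + a + b < 1 := by rw [← hkey]; exact hglt (i + p - q)
      have := hInf (g i + a + b) (Or.inl ⟨⟨i + p - q, hm2, hkey.symm⟩, by linarith⟩) ?_
      · rw [this]; right; right; simp; ring
      · rintro w (⟨⟨j, hj, rfl⟩, hxw⟩ | hw1)
        · by_contra h
          push_neg at h
          have hab1 : a + b ≤ 1 := by simp [hb]; linarith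
          rcases lt_trichotomy i j with hij | hij | hij
          · -- k = j - i, k < p
            have h1 : g (j - i) = Int.fract (g j - g i) := tdt_gSub α (le_of_lt hij)
            rw [tdt_fr1 _ (by linarith) (by have := hgge i; have := hglt j; linarith)] at h1
            have hkp : j - i < p := by omega
            have hka : a ≤ g (j - i) := minpos (j - i) (by omega) (by omega)
            have hkane : a ≠ g (j - i) := by
              intro he
              exact inj (j - i) p (by omega) hpmem.2 hkp he.symm
            have hgk : a < g (j - i) := lt_of_le_of_ne hka hkane
            have h2 : g (p - (j - i)) = Int.fract (a - g (j - i)) := tdt_gSub α (le_of_lt hkp)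
            rw [tdt_fr2 _ (by have := hglt (j-i); linarith) (by linarith)] at h2
            have := maxall (p - (j - i)) (by omega)
            rw [h2, h1] at *
            simp only [hb] at *
            linarith
          · subst hij; linarith
          · -- l = i - j, l < q
            have h1 : g (i - j) = Int.fract (g i - g j) := tdt_gSub α (le_of_lt hij)
            rw [tdt_fr2 _ (by linarith) (by linarith)] at h1
            have hlq : i - j < q := by omega
            have hlB : g (i - j) < B :=
              lt_of_le_of_ne (maxall (i - j) (by omega)) (inj (i - j) q (by omega) hqmem.2 hlq)
            have h2 : g (q - (i - j)) = Int.fract (B - g (i - j)) := tdt_gSub α (le_of_lt hlq)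
            rw [tdt_fr1 _ (by linarith) (by have := hgge (i - j); linarith)] at h2
            have := minpos (q - (i - j)) (by omega) (by omega)
            rw [h2, h1] at *
            simp only [hb] at *
            linarith
        · simp only [Set.mem_singleton_iff] at hw1
          rw [hw1]; linarith
    · -- case 3: i ≥ q, gap b
      rcases eq_or_lt_of_le hc3 with he | hqi
      · -- i = q : largest point, gap to 1
        have hgi : g i = B := by rw [hB, he]
        have := hInf 1 (Or.inr rfl) ?_
        · rw [this, hgi]; right; left; simp [hb]
        · rintro w (⟨⟨j, hj, rfl⟩, hxw⟩ | hw1)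
          · exfalso
            have := maxall j hj
            rw [hgi] at hxw
            linarith
          · simp only [Set.mem_singleton_iff] at hw1
            rw [hw1]
      · -- q < i
        have hiB : g i < B :=
          lt_of_le_of_ne (maxall i hin) (fun he => inj q i hqmem.2 hin hqi he.symm)
        have hkey : g (i - q) = g i + b := by
          have h1 : g (i - q) = Int.fract (g i - B) := tdt_gSub α (le_of_lt hqi)
          rw [h1, tdt_fr2 _ (by have := hgge i; linarith) (by linarith)]
          simp [hb]; ring
        have hz1 : g i + b < 1 := by rw [← hkey]; exact hglt (i - q)
        have := hInf (g i + b) (Or.inl ⟨⟨i - q, by omega, hkey.symm⟩, by linarith⟩) ?_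
        · rw [this]; right; left; ring
        · rintro w (⟨⟨j, hj, rfl⟩, hxw⟩ | hw1)
          · by_contra h
            push_neg at h
            rcases lt_trichotomy i j with hij | hij | hij
            · have h1 : g (j - i) = Int.fract (g j - g i) := tdt_gSub α (le_of_lt hij)
              rw [tdt_fr1 _ (by linarith) (by have := hgge i; have := hglt j; linarith)] at h1
              have h2 : g ((j - i) + q) = Int.fract (g (j - i) + B) := tdt_gAdd α (j - i) q
              rw [tdt_fr1 _ (by have := hgge (j - i); linarith)
                (by rw [h1]; simp only [hb] at *; linarith)] at h2
              have := maxall ((j - i) + q) (by omega)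
              rw [h2, h1] at this
              linarith
            · subst hij; linarith
            · have h1 : g (i - j) = Int.fract (g i - g j) := tdt_gSub α (le_of_lt hij)
              rw [tdt_fr2 _ (by linarith) (by linarith)] at h1
              have := maxall (i - j) (by omega)
              rw [h1] at this
              simp only [hb] at *
              linarith
          · simp only [Set.mem_singleton_iff] at hw1
            rw [hw1]; linarith

/-- **Three distance theorem** (qualitative form).
For a real `α ∈ (0,1)` and a positive integer `n`, consider the set `S` of
fractional parts `{i·α}` for `0 ≤ i ≤ n`, and for each point of `S` the length
of the subinterval of `[0,1)` from that point to the next larger point of `S`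
(or to `1` for the largest point).  These lengths take at most three distinct
values, and if exactly three distinct values occur, the largest equals the sum
of the other two. -/
theorem three_distance_at_most_three_lengths
    (α : ℝ) (hα : α ∈ Set.Ioo (0 : ℝ) 1) (n : ℕ) (hn : 0 < n) :
    let S : Set ℝ := {x | ∃ i : ℕ, i ≤ n ∧ x = Int.fract ((i : ℝ) * α)}
    let next : ℝ → ℝ := fun x => sInf ({y | y ∈ S ∧ x < y} ∪ {1})
    let L : Set ℝ := (fun x => next x - x) '' S
    L.ncard ≤ 3 ∧
      (L.ncard = 3 → ∃ u v w : ℝ, L = {u, v, w} ∧ u < v ∧ v < w ∧ w = u + v) := by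
  intro S next L
  obtain ⟨hα0, hα1⟩ := hα
  have hfr1 : Int.fract ((1 : ℕ) * α) = α := by
    push_cast; rw [one_mul]; exact Int.fract_eq_self.mpr ⟨le_of_lt hα0, hα1⟩
  classical
  have hred : ∃ n₀ : ℕ, 1 ≤ n₀ ∧ (∀ i : ℕ, 1 ≤ i → i ≤ n₀ → Int.fract ((i : ℝ) * α) ≠ 0) ∧
      S = {x : ℝ | ∃ i : ℕ, i ≤ n₀ ∧ x = Int.fract ((i : ℝ) * α)} := by
    by_cases h : ∃ i : ℕ, 1 ≤ i ∧ i ≤ n ∧ Int.fract ((i : ℝ) * α) = 0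
    · obtain ⟨d, ⟨hd1, hdn, hd0⟩, hdmin⟩ :
          ∃ d : ℕ, (1 ≤ d ∧ d ≤ n ∧ Int.fract ((d : ℝ) * α) = 0) ∧
            ∀ m : ℕ, m < d → ¬(1 ≤ m ∧ m ≤ n ∧ Int.fract ((m : ℝ) * α) = 0) :=
        ⟨Nat.find h, Nat.find_spec h, fun m hm => Nat.find_min h hm⟩
      have hd2 : 2 ≤ d := by
        by_contra hlt
        have hde : d = 1 := by omega
        rw [hde] at hd0
        rw [hfr1] at hd0
        linarith
      obtain ⟨z, hz⟩ : ∃ z : ℤ, (d : ℝ) * α = (z : ℝ) := by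
        refine ⟨⌊(d : ℝ) * α⌋, ?_⟩
        simp only [Int.fract] at hd0
        linarith
      refine ⟨d - 1, by omega, ?_, ?_⟩
      · intro i h1 h2 hzero
        exact hdmin i (by omega) ⟨h1, by omega, hzero⟩
      · ext x
        constructor
        · rintro ⟨i, hi, rfl⟩
          obtain ⟨k, r, hir, hrd⟩ : ∃ k r : ℕ, i = d * k + r ∧ r < d :=
            ⟨i / d, i % d, (Nat.div_add_mod i d).symm, Nat.mod_lt _ (by omega)⟩
          refine ⟨r, by omega, ?_⟩
          apply Int.fract_eq_fract.mpr
          refine ⟨(k : ℤ) * z, ?_⟩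
          subst hir
          push_cast
          linear_combination (k : ℝ) * hz
        · rintro ⟨i, hi, rfl⟩
          exact ⟨i, by omega, rfl⟩
    · push_neg at h
      exact ⟨n, hn, fun i h1 h2 => h i h1 h2, rfl⟩
  obtain ⟨n₀, hn₀, hnz, hSeq⟩ := hred
  obtain ⟨a, b, ha, hb, hgap⟩ := three_gap_core α n₀ hn₀ hnz
  have hLsub : L ⊆ ({a, b, a + b} : Set ℝ) := by
    rintro l ⟨x, hxS, rfl⟩
    show sInf ({y | y ∈ S ∧ x < y} ∪ {1}) - x ∈ ({a, b, a + b} : Set ℝ)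
    rw [hSeq] at hxS ⊢
    exact hgap x hxS
  have hfin3 : ({a, b, a + b} : Set ℝ).Finite := Set.toFinite _
  have hcard3 : ({a, b, a + b} : Set ℝ).ncard ≤ 3 := by
    refine le_trans (Set.ncard_insert_le _ _) ?_
    have h2 : ({b, a + b} : Set ℝ).ncard ≤ 2 := by
      refine le_trans (Set.ncard_insert_le _ _) ?_
      simp [Set.ncard_singleton]
    omega
  constructor
  · exact le_trans (Set.ncard_le_ncard hLsub hfin3) hcard3
  · intro h3
    have hEq : L = ({a, b, a + b} : Set ℝ) :=
      Set.eq_of_subset_of_ncard_le hLsub (by omega) hfin3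
    have hab : a ≠ b := by
      intro he
      rw [hEq, ← he] at h3
      have h2 : ({a, a, a + a} : Set ℝ).ncard ≤ 2 := by
        rw [Set.insert_idem]
        refine le_trans (Set.ncard_insert_le _ _) ?_
        simp [Set.ncard_singleton]
      omega
    refine ⟨min a b, max a b, a + b, ?_, min_lt_max.mpr hab, ?_, ?_⟩
    · rw [hEq]
      rcases le_total a b with h | h
      · rw [min_eq_left h, max_eq_right h]
      · rw [min_eq_right h, max_eq_left h, Set.insert_comm]
    · have hmm := min_add_max a b
      have : 0 < min a b := lt_min ha hb
      linarith
    · linarith [min_add_max a b]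
end

section
/- In the Farey-pair setting, the minimum of {iα} over all integers i with 1 ≤ i ≤ n equals s = bα − a, and it is attained only at i = b. -/
/-- In the Farey-pair setting, the minimum of `{i·α}` over `1 ≤ i ≤ n` equals
`s = bα - a`, attained only at `i = b`. -/
theorem fract_min_eq_s
    (n : ℕ) (hn : 0 < n) (α : ℝ) (hα : α ∈ Set.Ioo (0 : ℝ) 1)
    (hirr : ¬ ∃ p q : ℤ, 0 < q ∧ q ≤ (n : ℤ) ∧ α = (p : ℝ) / (q : ℝ))
    (a b c d : ℤ) (ha : 0 ≤ a) (hab : a < b) (hc : 0 < c) (hcd : c ≤ d)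
    (hdet : b * c - a * d = 1) (hb : b ≤ (n : ℤ)) (hd : d ≤ (n : ℤ))
    (hbd : (n : ℤ) + 1 ≤ b + d)
    (hl : (a : ℝ) / (b : ℝ) < α) (hr : α < (c : ℝ) / (d : ℝ)) :
    let s : ℝ := (b : ℝ) * α - (a : ℝ)
    (∀ i : ℕ, 1 ≤ i → i ≤ n → s ≤ Int.fract ((i : ℝ) * α)) ∧
    Int.fract ((b : ℝ) * α) = s ∧
    (∀ i : ℕ, 1 ≤ i → i ≤ n → Int.fract ((i : ℝ) * α) = s → (i : ℤ) = b) := by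
  intro s
  have hb0 : (0:ℤ) < b := lt_of_le_of_lt ha hab
  have hd0 : (0:ℤ) < d := lt_of_lt_of_le hc hcd
  have hbR : (0:ℝ) < (b:ℝ) := by exact_mod_cast hb0
  have hdR : (0:ℝ) < (d:ℝ) := by exact_mod_cast hd0
  have hA : (a:ℝ) < (b:ℝ) * α := by
    rw [mul_comm]; exact (div_lt_iff₀ hbR).mp hl
  have hB : (d:ℝ) * α < (c:ℝ) := by
    rw [mul_comm]; exact (lt_div_iff₀ hdR).mp hr
  have hdetR : (b:ℝ) * c - a * d = 1 := by exact_mod_cast hdet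
  set t : ℝ := (c:ℝ) - (d:ℝ) * α with ht
  have hs0 : 0 < s := by simp only [s]; linarith
  have ht0 : 0 < t := by simp only [t]; linarith
  have hds : (d:ℝ) * s < 1 := by
    have : (d:ℝ) * s = (b:ℝ) * ((d:ℝ)*α) - a*d := by simp only [s]; ring
    nlinarith
  have hbt : (b:ℝ) * t < 1 := by
    have : (b:ℝ) * t = (b:ℝ)*c - (d:ℝ)*((b:ℝ)*α) := by simp only [t]; ring
    nlinarith
  have hd1 : (1:ℝ) ≤ (d:ℝ) := by exact_mod_cast hd0
  have hb1 : (1:ℝ) ≤ (b:ℝ) := by exact_mod_cast hb0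
  have hs1 : s < 1 := by nlinarith
  have key : ∀ i : ℕ, 1 ≤ i → i ≤ n →
      s ≤ Int.fract ((i:ℝ)*α) ∧ (Int.fract ((i:ℝ)*α) = s → (i:ℤ) = b) := by
    intro i hi1 hin
    set j : ℤ := ⌊(i:ℝ)*α⌋ with hjdef
    have hfr : Int.fract ((i:ℝ)*α) = (i:ℝ)*α - (j:ℝ) := rfl
    set u : ℤ := (i:ℤ)*c - j*d with hu
    set v : ℤ := j*b - (i:ℤ)*a with hv
    have hiuv : u*b + v*d = (i:ℤ) := by
      simp only [hu, hv]; linear_combination (i:ℤ)*hdet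
    have hjuv : u*a + v*c = j := by
      simp only [hu, hv]; linear_combination j*hdet
    have h1 : (u:ℝ)*b + (v:ℝ)*d = (i:ℝ) := by exact_mod_cast hiuv
    have h2 : (u:ℝ)*a + (v:ℝ)*c = (j:ℝ) := by exact_mod_cast hjuv
    have hval : (i:ℝ)*α - (j:ℝ) = (u:ℝ)*s - (v:ℝ)*t := by
      simp only [s, t]; linear_combination (-α) * h1 + h2
    have hi1' : (1:ℤ) ≤ (i:ℤ) := by exact_mod_cast hi1
    have hin' : (i:ℤ) ≤ (n:ℤ) := by exact_mod_cast hin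
    have hpos : 0 < Int.fract ((i:ℝ)*α) := by
      rcases (Int.fract_nonneg ((i:ℝ)*α)).lt_or_eq with h | h
      · exact h
      · exfalso
        apply hirr
        refine ⟨j, (i:ℤ), by omega, hin', ?_⟩
        have hiα : (i:ℝ)*α = (j:ℝ) := by rw [hfr] at h; linarith
        have hiR : (0:ℝ) < (i:ℝ) := by exact_mod_cast hi1'
        field_simp
        push_cast; linarith [hiα]
    have hvle : v ≤ 0 := by
      by_contra hvpos
      push_neg at hvpos
      have hvd : d ≤ v*d := le_mul_of_one_le_left hd0.le hvpos
      have hub : u*b ≤ b - 1 := by omega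
      have hu0 : u ≤ 0 := by nlinarith
      have huR : (u:ℝ) ≤ 0 := by exact_mod_cast hu0
      have hvR : (1:ℝ) ≤ (v:ℝ) := by exact_mod_cast hvpos
      have hneg : (u:ℝ)*s - (v:ℝ)*t < 0 := by nlinarith
      rw [hfr, hval] at hpos
      linarith
    have hu1 : 1 ≤ u := by
      by_contra h
      push_neg at h
      have h' : u ≤ 0 := by omega
      have hub : u*b ≤ 0 := mul_nonpos_of_nonpos_of_nonneg h' hb0.le
      have hvd : v*d ≤ 0 := mul_nonpos_of_nonpos_of_nonneg hvle hd0.le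
      omega
    have huR : (1:ℝ) ≤ (u:ℝ) := by exact_mod_cast hu1
    have hvR : (v:ℝ) ≤ 0 := by exact_mod_cast hvle
    have hrng : (u:ℝ)*s - (v:ℝ)*t - s = ((u:ℝ)-1)*s + (-(v:ℝ))*t := by ring
    have hp1 : 0 ≤ ((u:ℝ)-1)*s := mul_nonneg (by linarith) hs0.le
    have hp2 : 0 ≤ (-(v:ℝ))*t := mul_nonneg (by linarith) ht0.le
    have hge : s ≤ (u:ℝ)*s - (v:ℝ)*t := by linarith
    constructor
    · rw [hfr, hval]; exact hge
    · intro heq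
      rw [hfr, hval] at heq
      have hu2 : u = 1 := by
        by_contra h
        have h2u : 2 ≤ u := by omega
        have h2R : (2:ℝ) ≤ (u:ℝ) := by exact_mod_cast h2u
        have : (1:ℝ)*s ≤ ((u:ℝ)-1)*s := mul_le_mul_of_nonneg_right (by linarith) hs0.le
        linarith
      have hv2 : v = 0 := by
        by_contra h
        have hvm : v ≤ -1 := by omega
        have hvmR : (v:ℝ) ≤ -1 := by exact_mod_cast hvm
        have : (1:ℝ)*t ≤ (-(v:ℝ))*t := mul_le_mul_of_nonneg_right (by linarith) ht0.le
        linarith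
      have : (i:ℤ) = 1*b + 0*d := by rw [← hiuv, hu2, hv2]
      omega
  refine ⟨fun i h1 h2 => (key i h1 h2).1, ?_, fun i h1 h2 he => (key i h1 h2).2 he⟩
  have hbα : (b:ℝ)*α = (a:ℝ) + s := by simp only [s]; ring
  rw [hbα, Int.fract_intCast_add]
  exact Int.fract_eq_self.mpr ⟨hs0.le, hs1⟩
end

section
/- In the Farey-pair setting, the maximum of {iα} over all integers i with 1 ≤ i ≤ n equals 1 − t = dα − c + 1, and it is attained only at i = d. -/
lemma farey_key (n : ℕ) (α : ℝ)
    (a b c d : ℤ) (ha : 0 ≤ a) (hab : a < b) (hc : 0 < c) (hcd : c ≤ d)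
    (hdet : b * c - a * d = 1)
    (hbd : (n : ℤ) + 1 ≤ b + d)
    (hs : 0 < (b : ℝ) * α - a) (ht : 0 < (c : ℝ) - d * α)
    (i j : ℤ) (hi1 : 1 ≤ i) (hin : i ≤ (n : ℤ))
    (hpos : 0 < (j : ℝ) - i * α) :
    ((c : ℝ) - d * α) ≤ (j : ℝ) - i * α ∧
      ((j : ℝ) - i * α = (c : ℝ) - d * α → i = d) := by
  have hb0 : 0 < b := lt_of_le_of_lt ha hab
  have hd0 : 0 < d := lt_of_lt_of_le hc hcd
  set x : ℤ := i * c - j * d with hxd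
  set y : ℤ := j * b - i * a with hyd
  have hib : x * b + y * d = i := by rw [hxd, hyd]; linear_combination i * hdet
  have hja : x * a + y * c = j := by rw [hxd, hyd]; linear_combination j * hdet
  have hib' : (x : ℝ) * b + y * d = i := by exact_mod_cast congrArg (Int.cast : ℤ → ℝ) hib
  have hja' : (x : ℝ) * a + y * c = j := by exact_mod_cast congrArg (Int.cast : ℤ → ℝ) hja
  have hval : (j : ℝ) - i * α = -(x : ℝ) * ((b : ℝ) * α - a) + (y : ℝ) * ((c : ℝ) - d * α) := by
    linear_combination (-1) * hja' + α * hib'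
  rcases le_or_gt x 0 with hx | hx
  · rcases le_or_gt y 0 with hy | hy
    · exfalso
      nlinarith [mul_nonpos_of_nonpos_of_nonneg hx hb0.le,
        mul_nonpos_of_nonpos_of_nonneg hy hd0.le]
    · have hy1 : 1 ≤ y := hy
      have hx' : (x : ℝ) ≤ 0 := by exact_mod_cast hx
      have hy' : (1 : ℝ) ≤ (y : ℝ) := by exact_mod_cast hy1
      constructor
      · rw [hval]
        nlinarith [mul_nonneg (neg_nonneg.2 hx') hs.le,
          mul_nonneg (by linarith : (0:ℝ) ≤ (y:ℝ) - 1) ht.le]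
      · intro heq
        rw [hval] at heq
        have h1 : 0 ≤ -(x : ℝ) * ((b : ℝ) * α - a) :=
          mul_nonneg (neg_nonneg.2 hx') hs.le
        have h2 : 0 ≤ ((y : ℝ) - 1) * ((c : ℝ) - d * α) :=
          mul_nonneg (by linarith) ht.le
        have hx0 : (x : ℝ) = 0 := by
          have hxz : -(x : ℝ) * ((b : ℝ) * α - a) = 0 := by nlinarith
          rcases mul_eq_zero.1 hxz with h | h
          · linarith
          · exfalso; linarith
        have hy1' : (y : ℝ) = 1 := by
          have hyz : ((y : ℝ) - 1) * ((c : ℝ) - d * α) = 0 := by nlinarith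
          rcases mul_eq_zero.1 hyz with h | h
          · linarith
          · exfalso; linarith
        have hxz : x = 0 := by exact_mod_cast hx0
        have hyz : y = 1 := by exact_mod_cast hy1'
        rw [hxz, hyz] at hib
        omega
  · exfalso
    rcases le_or_gt y 0 with hy | hy
    · have hx' : (1 : ℝ) ≤ (x : ℝ) := by exact_mod_cast hx
      have hy' : (y : ℝ) ≤ 0 := by exact_mod_cast hy
      rw [hval] at hpos
      nlinarith [mul_nonpos_of_nonpos_of_nonneg hy' ht.le,
        mul_nonneg (by linarith : (0:ℝ) ≤ (x:ℝ) - 1) hs.le]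
    · nlinarith [mul_nonneg (by omega : (0:ℤ) ≤ x - 1) hb0.le,
        mul_nonneg (by omega : (0:ℤ) ≤ y - 1) hd0.le]

/-- In the Farey-pair setting, the maximum of `{i·α}` over `1 ≤ i ≤ n` equals
`1 - t = dα - c + 1`, attained only at `i = d`. -/
theorem fract_max_eq_one_sub_t
    (n : ℕ) (hn : 0 < n) (α : ℝ) (hα : α ∈ Set.Ioo (0 : ℝ) 1)
    (hirr : ¬ ∃ p q : ℤ, 0 < q ∧ q ≤ (n : ℤ) ∧ α = (p : ℝ) / (q : ℝ))
    (a b c d : ℤ) (ha : 0 ≤ a) (hab : a < b) (hc : 0 < c) (hcd : c ≤ d)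
    (hdet : b * c - a * d = 1) (hb : b ≤ (n : ℤ)) (hd : d ≤ (n : ℤ))
    (hbd : (n : ℤ) + 1 ≤ b + d)
    (hl : (a : ℝ) / (b : ℝ) < α) (hr : α < (c : ℝ) / (d : ℝ)) :
    let t : ℝ := (c : ℝ) - (d : ℝ) * α
    (∀ i : ℕ, 1 ≤ i → i ≤ n → Int.fract ((i : ℝ) * α) ≤ 1 - t) ∧
    Int.fract ((d : ℝ) * α) = 1 - t ∧
    (1 - t = (d : ℝ) * α - (c : ℝ) + 1) ∧
    (∀ i : ℕ, 1 ≤ i → i ≤ n → Int.fract ((i : ℝ) * α) = 1 - t → (i : ℤ) = d) := by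
  intro t
  have hb0 : 0 < b := lt_of_le_of_lt ha hab
  have hd0 : 0 < d := lt_of_lt_of_le hc hcd
  have hb0' : (0:ℝ) < (b:ℝ) := by exact_mod_cast hb0
  have hd0' : (0:ℝ) < (d:ℝ) := by exact_mod_cast hd0
  have hs : 0 < (b : ℝ) * α - a := by
    rw [div_lt_iff₀ hb0'] at hl; linarith
  have ht : 0 < (c : ℝ) - d * α := by
    rw [lt_div_iff₀ hd0'] at hr; linarith
  have hdet' : (b : ℝ) * c - a * d = 1 := by exact_mod_cast hdet
  have ht1 : (c : ℝ) - d * α < 1 := by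
    have hcomb : (d : ℝ) * ((b:ℝ) * α - a) + (b:ℝ) * ((c:ℝ) - d * α) = 1 := by
      linear_combination hdet'
    have hb1 : (1:ℝ) ≤ (b:ℝ) := by exact_mod_cast hb0
    nlinarith
  have htdef : t = (c : ℝ) - (d : ℝ) * α := rfl
  have hfloor : ⌊(d : ℝ) * α⌋ = c - 1 := by
    rw [Int.floor_eq_iff]
    constructor
    · push_cast; linarith
    · push_cast; linarith
  have hfd : Int.fract ((d : ℝ) * α) = 1 - t := by
    rw [Int.fract, hfloor, htdef]; push_cast; ring
  have hmax : ∀ i : ℕ, 1 ≤ i → i ≤ n → Int.fract ((i : ℝ) * α) ≤ 1 - t := by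
    intro i h1 h2
    have hi1 : (1 : ℤ) ≤ (i : ℤ) := by exact_mod_cast h1
    have hin : (i : ℤ) ≤ (n : ℤ) := by exact_mod_cast h2
    have hpos : 0 < ((⌊(i : ℝ) * α⌋ + 1 : ℤ) : ℝ) - (i : ℤ) * α := by
      push_cast
      have := Int.fract_lt_one ((i : ℝ) * α)
      rw [Int.fract] at this; linarith
    have := (farey_key n α a b c d ha hab hc hcd hdet hbd hs ht
      (i : ℤ) (⌊(i : ℝ) * α⌋ + 1) hi1 hin hpos).1
    rw [Int.fract, htdef]
    push_cast at this ⊢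
    linarith
  refine ⟨hmax, hfd, by rw [htdef]; ring, ?_⟩
  intro i h1 h2 heq
  have hi1 : (1 : ℤ) ≤ (i : ℤ) := by exact_mod_cast h1
  have hin : (i : ℤ) ≤ (n : ℤ) := by exact_mod_cast h2
  have hpos : 0 < ((⌊(i : ℝ) * α⌋ + 1 : ℤ) : ℝ) - (i : ℤ) * α := by
    push_cast
    have := Int.fract_lt_one ((i : ℝ) * α)
    rw [Int.fract] at this; linarith
  have heq' : ((⌊(i : ℝ) * α⌋ + 1 : ℤ) : ℝ) - (i : ℤ) * α = (c : ℝ) - d * α := by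
    rw [Int.fract, htdef] at heq
    push_cast
    linarith
  exact (farey_key n α a b c d ha hab hc hcd hdet hbd hs ht
    (i : ℤ) (⌊(i : ℝ) * α⌋ + 1) hi1 hin hpos).2 heq'
end

section
/- In the Farey-pair setting, for every integer i with 0 ≤ i ≤ n − b one has {(i+b)α} = {iα} + s, and {(i+b)α} is the immediate successor of {iα} in the set { {jα} : 0 ≤ j ≤ n }, i.e., no j with 0 ≤ j ≤ n satisfies {iα} < {jα} < {(i+b)α}. -/
private lemma farey_key_s6 (α : ℝ) (a b c d : ℤ)
    (hb1 : (1:ℤ) ≤ b) (hd1 : (1:ℤ) ≤ d) (hdet : b * c - a * d = 1)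
    (hs0 : 0 < (b:ℝ)*α - a) (ht0 : 0 < (c:ℝ) - d*α)
    (k m : ℤ) (h1 : 0 < (k:ℝ)*α - m) (h2 : (k:ℝ)*α - m < (b:ℝ)*α - a) :
    b + d ≤ k ∨ k ≤ -d := by
  obtain ⟨u, v, hk, hm⟩ : ∃ u v : ℤ, u*b + v*d = k ∧ u*a + v*c = m :=
    ⟨c*k - d*m, -(a*k) + b*m, by linear_combination k*hdet, by linear_combination m*hdet⟩
  have hkR : (u:ℝ)*b + v*d = k := by exact_mod_cast hk
  have hmR : (u:ℝ)*a + v*c = m := by exact_mod_cast hm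
  have hrepr : (k:ℝ)*α - m = (u:ℝ)*((b:ℝ)*α - a) - (v:ℝ)*((c:ℝ) - d*α) := by
    linear_combination (-α) * hkR + hmR
  rw [hrepr] at h1 h2
  rcases lt_trichotomy v 0 with hv1 | hv1 | hv1
  · right
    have hvR : (v:ℝ) ≤ -1 := by exact_mod_cast (by omega : v ≤ -1)
    have huv : u ≤ 0 := by
      by_contra hcon
      push_neg at hcon
      have huR : (1:ℝ) ≤ (u:ℝ) := by exact_mod_cast hcon
      nlinarith
    have h3 : u*b ≤ 0 := mul_nonpos_of_nonpos_of_nonneg huv (by omega)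
    have h4 : (v+1)*d ≤ 0 := mul_nonpos_of_nonpos_of_nonneg (by omega) (by omega)
    nlinarith
  · exfalso
    rw [hv1] at h1 h2
    push_cast at h1 h2
    have h5 : (0:ℝ) < u := by nlinarith
    have h6 : (1:ℝ) ≤ (u:ℝ) := by exact_mod_cast (by exact_mod_cast h5 : (0:ℤ) < u)
    nlinarith
  · left
    have hvR : (1:ℝ) ≤ (v:ℝ) := by exact_mod_cast hv1
    have huv : 1 ≤ u := by
      by_contra hcon
      push_neg at hcon
      have huR : (u:ℝ) ≤ 0 := by exact_mod_cast (by omega : u ≤ 0)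
      nlinarith
    have h3 : 0 ≤ (u-1)*b := mul_nonneg (by omega) (by omega)
    have h4 : 0 ≤ (v-1)*d := mul_nonneg (by omega) (by omega)
    nlinarith

/-- In the Farey-pair setting, for `0 ≤ i ≤ n - b` we have `{(i+b)α} = {iα} + s`,
and `{(i+b)α}` is the immediate successor of `{iα}` among the points `{jα}`,
`0 ≤ j ≤ n`. -/
theorem successor_small_interval
    (n : ℕ) (hn : 0 < n) (α : ℝ) (hα : α ∈ Set.Ioo (0 : ℝ) 1)
    (hirr : ¬ ∃ p q : ℤ, 0 < q ∧ q ≤ (n : ℤ) ∧ α = (p : ℝ) / (q : ℝ))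
    (a b c d : ℤ) (ha : 0 ≤ a) (hab : a < b) (hc : 0 < c) (hcd : c ≤ d)
    (hdet : b * c - a * d = 1) (hb : b ≤ (n : ℤ)) (hd : d ≤ (n : ℤ))
    (hbd : (n : ℤ) + 1 ≤ b + d)
    (hl : (a : ℝ) / (b : ℝ) < α) (hr : α < (c : ℝ) / (d : ℝ)) :
    let s : ℝ := (b : ℝ) * α - (a : ℝ)
    ∀ i : ℕ, (i : ℤ) ≤ (n : ℤ) - b →
      Int.fract (((i : ℝ) + (b : ℝ)) * α) = Int.fract ((i : ℝ) * α) + s ∧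
      ¬ ∃ j : ℕ, j ≤ n ∧ Int.fract ((i : ℝ) * α) < Int.fract ((j : ℝ) * α) ∧
          Int.fract ((j : ℝ) * α) < Int.fract (((i : ℝ) + (b : ℝ)) * α) := by
  obtain ⟨hα0, hα1⟩ := hα
  have hb1 : (1 : ℤ) ≤ b := by omega
  have hd1 : (1 : ℤ) ≤ d := by omega
  have hbR : (0:ℝ) < (b:ℝ) := by exact_mod_cast (by omega : (0:ℤ) < b)
  have hdR : (0:ℝ) < (d:ℝ) := by exact_mod_cast (by omega : (0:ℤ) < d)
  have hdetR : (b:ℝ) * c - a * d = 1 := by exact_mod_cast hdet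
  have hs0 : 0 < (b:ℝ)*α - a := by
    rw [div_lt_iff₀ hbR] at hl; linarith
  have ht0 : 0 < (c:ℝ) - d*α := by
    rw [lt_div_iff₀ hdR] at hr; linarith
  have hdR1 : (1:ℝ) ≤ (d:ℝ) := by exact_mod_cast hd1
  have hds : (d:ℝ)*((b:ℝ)*α - a) < 1 := by nlinarith [mul_pos hbR ht0]
  have hs1 : (b:ℝ)*α - a < 1 := by
    nlinarith [mul_nonneg (sub_nonneg.mpr hdR1) hs0.le]
  have key := farey_key_s6 α a b c d hb1 hd1 hdet hs0 ht0
  intro s i hi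
  have hiz : (0:ℤ) ≤ (i:ℤ) := Int.ofNat_nonneg i
  have hfr_lt : Int.fract ((i:ℝ)*α) + ((b:ℝ)*α - a) < 1 := by
    by_contra hcon
    push_neg at hcon
    rcases Nat.eq_zero_or_pos i with rfl | hi1
    · simp only [Nat.cast_zero, zero_mul, Int.fract_zero, zero_add] at hcon
      linarith
    · have hle : 1 - Int.fract ((i:ℝ)*α) ≤ (b:ℝ)*α - a := by linarith
      rcases lt_or_eq_of_le hle with hlt | heq
      · have h1' : 0 < ((-(i:ℤ) : ℤ):ℝ)*α - ((-⌊(i:ℝ)*α⌋ - 1 : ℤ):ℝ) := by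
          have := Int.fract_lt_one ((i:ℝ)*α)
          simp only [Int.fract] at this
          push_cast
          linarith
        have h2' : ((-(i:ℤ) : ℤ):ℝ)*α - ((-⌊(i:ℝ)*α⌋ - 1 : ℤ):ℝ) < (b:ℝ)*α - a := by
          simp only [Int.fract] at hlt
          push_cast
          linarith
        rcases key _ _ h1' h2' with h | h
        · omega
        · omega
      · apply hirr
        refine ⟨⌊(i:ℝ)*α⌋ + 1 + a, (i:ℤ) + b, by omega, by omega, ?_⟩
        have hq : (((i:ℤ) + b : ℤ):ℝ) ≠ 0 := by
          have : (0:ℤ) < (i:ℤ) + b := by omega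
          exact_mod_cast this.ne'
        rw [eq_div_iff hq]
        simp only [Int.fract] at heq
        push_cast
        linarith
  have hfr0 : 0 ≤ Int.fract ((i:ℝ)*α) + ((b:ℝ)*α - a) := by
    have := Int.fract_nonneg ((i:ℝ)*α)
    linarith
  have hsplit : ((i:ℝ) + b) * α =
      (Int.fract ((i:ℝ)*α) + ((b:ℝ)*α - a)) + ((⌊(i:ℝ)*α⌋ + a : ℤ) : ℝ) := by
    simp only [Int.fract]
    push_cast
    ring
  have h1 : Int.fract (((i:ℝ) + b) * α) = Int.fract ((i:ℝ)*α) + ((b:ℝ)*α - a) := by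
    rw [hsplit, Int.fract_add_intCast, Int.fract_eq_self.mpr ⟨hfr0, hfr_lt⟩]
  refine ⟨h1, ?_⟩
  rintro ⟨j, hjn, hj1, hj2⟩
  rw [h1] at hj2
  have hjn' : (j:ℤ) ≤ (n:ℤ) := by exact_mod_cast hjn
  have hkm : (((j:ℤ) - i : ℤ):ℝ)*α - ((⌊(j:ℝ)*α⌋ - ⌊(i:ℝ)*α⌋ : ℤ):ℝ)
      = Int.fract ((j:ℝ)*α) - Int.fract ((i:ℝ)*α) := by
    simp only [Int.fract]
    push_cast
    ring
  rcases key ((j:ℤ) - i) (⌊(j:ℝ)*α⌋ - ⌊(i:ℝ)*α⌋)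
      (by rw [hkm]; linarith) (by rw [hkm]; linarith) with h | h
  · omega
  · omega
end

section
/- In the Farey-pair setting, for every integer i with n − b < i < d one has {(i+b−d)α} = {iα} + s + t, and {(i+b−d)α} is the immediate successor of {iα} in the set { {jα} : 0 ≤ j ≤ n }, i.e., no j with 0 ≤ j ≤ n satisfies {iα} < {jα} < {(i+b−d)α}. -/
lemma farey_decomp (α s t : ℝ) (a b c d : ℤ) (hdet : b * c - a * d = 1)
    (hb0 : 0 < b) (hd0 : 0 < d) (hs : 0 < s) (ht : 0 < t)
    (hsdef : s = (b : ℝ) * α - a) (htdef : t = (c : ℝ) - d * α)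
    (m M : ℤ) (h1 : 0 < (m : ℝ) * α - M) (h2 : (m : ℝ) * α - M ≤ s + t) :
    b ≤ m ∨ m ≤ -d ∨ (m = b - d ∧ (m : ℝ) * α - M = s + t) := by
  set p : ℤ := m * c - M * d with hp
  set q : ℤ := M * b - m * a with hq
  have hm : p * b + q * d = m := by rw [hp, hq]; linear_combination m * hdet
  have hm' : (p : ℝ) * b + q * d = m := by exact_mod_cast hm
  have hM : p * a + q * c = M := by rw [hp, hq]; linear_combination M * hdet
  have hM' : (p : ℝ) * a + q * c = M := by exact_mod_cast hM
  have hθ : (m : ℝ) * α - M = (p : ℝ) * s - q * t := by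
    rw [hsdef, htdef]; linear_combination α * hm'.symm - hM'.symm
  rw [hθ] at h1 h2
  rcases lt_trichotomy q 0 with hq0 | hq0 | hq0
  · have hq1' : (q : ℝ) ≤ -1 := by exact_mod_cast (by omega : q ≤ -1)
    have hpl : p ≤ 1 := by
      by_contra hcon
      have h2' : (2 : ℝ) ≤ p := by exact_mod_cast (by omega : (2:ℤ) ≤ p)
      nlinarith
    rcases eq_or_lt_of_le hpl with hp1 | hp0
    · have hqm1 : q = -1 := by
        by_contra hcon
        have hq2 : (q : ℝ) ≤ -2 := by exact_mod_cast (by omega : q ≤ -2)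
        have hp1' : (p : ℝ) = 1 := by exact_mod_cast hp1
        nlinarith
      right; right
      refine ⟨by rw [← hm, hp1, hqm1]; ring, ?_⟩
      have hp1' : (p : ℝ) = 1 := by exact_mod_cast hp1
      have hq1'' : (q : ℝ) = -1 := by exact_mod_cast hqm1
      rw [hθ, hp1', hq1'']; ring
    · have hp0' : p ≤ 0 := by omega
      right; left
      nlinarith [hm]
  · have hqr : (q : ℝ) = 0 := by exact_mod_cast hq0
    have hp1 : 1 ≤ p := by
      by_contra hcon
      have : (p : ℝ) ≤ 0 := by exact_mod_cast (by omega : p ≤ 0)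
      nlinarith
    left
    nlinarith [hm]
  · have hq1' : (1 : ℝ) ≤ q := by exact_mod_cast (by omega : (1:ℤ) ≤ q)
    have hp1 : 1 ≤ p := by
      by_contra hcon
      have : (p : ℝ) ≤ 0 := by exact_mod_cast (by omega : p ≤ 0)
      nlinarith
    left
    nlinarith [hm]

/-- In the Farey-pair setting, for `n - b < i < d` we have
`{(i+b-d)α} = {iα} + s + t`, and `{(i+b-d)α}` is the immediate successor of
`{iα}` among the points `{jα}`, `0 ≤ j ≤ n`. -/
theorem successor_trapezoid_interval
    (n : ℕ) (hn : 0 < n) (α : ℝ) (hα : α ∈ Set.Ioo (0 : ℝ) 1)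
    (hirr : ¬ ∃ p q : ℤ, 0 < q ∧ q ≤ (n : ℤ) ∧ α = (p : ℝ) / (q : ℝ))
    (a b c d : ℤ) (ha : 0 ≤ a) (hab : a < b) (hc : 0 < c) (hcd : c ≤ d)
    (hdet : b * c - a * d = 1) (hb : b ≤ (n : ℤ)) (hd : d ≤ (n : ℤ))
    (hbd : (n : ℤ) + 1 ≤ b + d)
    (hl : (a : ℝ) / (b : ℝ) < α) (hr : α < (c : ℝ) / (d : ℝ)) :
    let s : ℝ := (b : ℝ) * α - (a : ℝ)
    let t : ℝ := (c : ℝ) - (d : ℝ) * α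
    ∀ i : ℕ, (n : ℤ) - b < (i : ℤ) → (i : ℤ) < d →
      Int.fract (((i : ℝ) + (b : ℝ) - (d : ℝ)) * α) = Int.fract ((i : ℝ) * α) + s + t ∧
      ¬ ∃ j : ℕ, j ≤ n ∧ Int.fract ((i : ℝ) * α) < Int.fract ((j : ℝ) * α) ∧
          Int.fract ((j : ℝ) * α) < Int.fract (((i : ℝ) + (b : ℝ) - (d : ℝ)) * α) := by
  intro s t i hi1 hi2
  have hsdef : s = (b : ℝ) * α - a := rfl
  have htdef : t = (c : ℝ) - d * α := rfl
  have hb0 : 0 < b := lt_of_le_of_lt ha hab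
  have hd0 : 0 < d := lt_of_lt_of_le hc hcd
  have hb0' : (0 : ℝ) < b := by exact_mod_cast hb0
  have hd0' : (0 : ℝ) < d := by exact_mod_cast hd0
  have hs : 0 < s := by
    rw [hsdef]
    rw [div_lt_iff₀ hb0'] at hl
    linarith
  have ht : 0 < t := by
    rw [htdef]
    rw [lt_div_iff₀ hd0'] at hr
    linarith
  have hFd : Int.fract ((i : ℝ) * α) = (i : ℝ) * α - ⌊(i : ℝ) * α⌋ := rfl
  -- Part 0: {iα} + s + t < 1
  have hF1 : Int.fract ((i : ℝ) * α) + s + t < 1 := by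
    by_contra hcon
    push_neg at hcon
    have h1 : 0 < ((-(i : ℤ) : ℤ) : ℝ) * α - ((-⌊(i : ℝ) * α⌋ - 1 : ℤ) : ℝ) := by
      have := Int.fract_lt_one ((i : ℝ) * α)
      push_cast
      rw [hFd] at this
      linarith
    have h2 : ((-(i : ℤ) : ℤ) : ℝ) * α - ((-⌊(i : ℝ) * α⌋ - 1 : ℤ) : ℝ) ≤ s + t := by
      push_cast
      rw [hFd] at hcon
      linarith
    rcases farey_decomp α s t a b c d hdet hb0 hd0 hs ht hsdef htdef _ _ h1 h2 with
      h | h | ⟨h, _⟩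
    · omega
    · omega
    · omega
  have heq : Int.fract (((i : ℝ) + (b : ℝ) - (d : ℝ)) * α)
      = Int.fract ((i : ℝ) * α) + s + t := by
    have e1 : ((i : ℝ) + (b : ℝ) - (d : ℝ)) * α
        = (Int.fract ((i : ℝ) * α) + (s + t)) + ((⌊(i : ℝ) * α⌋ + a - c : ℤ) : ℝ) := by
      rw [hFd, hsdef, htdef]; push_cast; ring
    rw [e1, Int.fract_add_intCast, Int.fract_eq_self.mpr
      ⟨by have := Int.fract_nonneg ((i : ℝ) * α); linarith, by linarith⟩]
    ring
  refine ⟨heq, ?_⟩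
  rintro ⟨j, hjn, hj1, hj2⟩
  rw [heq] at hj2
  have hFj : Int.fract ((j : ℝ) * α) = (j : ℝ) * α - ⌊(j : ℝ) * α⌋ := rfl
  have h1 : 0 < (((j : ℤ) - (i : ℤ) : ℤ) : ℝ) * α
      - ((⌊(j : ℝ) * α⌋ - ⌊(i : ℝ) * α⌋ : ℤ) : ℝ) := by
    push_cast
    rw [hFd] at hj1; rw [hFj] at hj1
    linarith
  have h2 : (((j : ℤ) - (i : ℤ) : ℤ) : ℝ)  * α
      - ((⌊(j : ℝ) * α⌋ - ⌊(i : ℝ) * α⌋ : ℤ) : ℝ) ≤ s + t := by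
    push_cast
    rw [hFd] at hj2; rw [hFj] at hj2
    linarith
  have hjn' : (j : ℤ) ≤ (n : ℤ) := by exact_mod_cast hjn
  have hj0 : (0 : ℤ) ≤ (j : ℤ) := Int.ofNat_nonneg j
  rcases farey_decomp α s t a b c d hdet hb0 hd0 hs ht hsdef htdef _ _ h1 h2 with
    h | h | ⟨_, h⟩
  · omega
  · omega
  · push_cast at h; rw [hFd] at hj2; rw [hFj] at hj2; linarith
end

section
/- Let α ∈ (0,1) be irrational and β ∈ (0,1) with β ≥ max(α, 1 − α). Then for every natural number i with {iα} < β, the gap after i is equal to 1 or 2. -/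
private lemma frac_shift (a b : ℝ) :
    Int.fract (a + b) = Int.fract (Int.fract a + b) := by
  conv_lhs => rw [← Int.floor_add_fract a]
  rw [add_assoc, Int.fract_intCast_add]

private lemma frac_of_Ico (y : ℝ) (h1 : 1 ≤ y) (h2 : y < 2) :
    Int.fract y = y - 1 := by
  have h : Int.fract y = Int.fract (y - (1:ℤ)) := (Int.fract_sub_intCast y 1).symm
  rw [h, Int.fract_eq_self.2 ⟨by push_cast; linarith, by push_cast; linarith⟩]
  push_cast; ring

/-- **Three gap theorem, case 1** (qualitative). If `α ∈ (0,1)` is irrational,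
`β ∈ (0,1)` and `β ≥ max(α, 1-α)`, then for every `i` with `{iα} < β` the gap
after `i` (the least positive `e` with `{(i+e)α} < β`) is `1` or `2`. -/
theorem three_gap_case_one
    (α β : ℝ) (hα : α ∈ Set.Ioo (0 : ℝ) 1) (hirr : Irrational α)
    (hβ : β ∈ Set.Ioo (0 : ℝ) 1) (hβmax : max α (1 - α) ≤ β) :
    let gap : ℕ → ℕ := fun i => sInf {e : ℕ | 0 < e ∧ Int.fract (((i : ℝ) + (e : ℝ)) * α) < β}
    ∀ i : ℕ, Int.fract ((i : ℝ) * α) < β → gap i = 1 ∨ gap i = 2 := by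
  intro gap i hi
  obtain ⟨hα0, hα1⟩ := hα
  obtain ⟨hβ0, hβ1⟩ := hβ
  have hαβ : α ≤ β := le_trans (le_max_left _ _) hβmax
  have h1αβ : 1 - α ≤ β := le_trans (le_max_right _ _) hβmax
  set x := Int.fract ((i:ℝ) * α) with hx
  have hx0 : 0 ≤ x := Int.fract_nonneg _
  have hx1 : x < 1 := Int.fract_lt_one _
  have key : ∀ e : ℕ, Int.fract (((i:ℝ) + e) * α) = Int.fract (x + e * α) := by
    intro e
    rw [add_mul, frac_shift]
  have ne1 : x + α ≠ 1 := by
    intro h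
    have hiα : (i:ℝ) * α = (⌊(i:ℝ)*α⌋ : ℝ) + x := by
      rw [hx, Int.floor_add_fract]
    have hirr' : Irrational (((i+1 : ℕ) : ℝ) * α) := hirr.natCast_mul (by omega)
    apply hirr'.ne_int (⌊(i:ℝ)*α⌋ + 1)
    push_cast
    linarith
  by_cases h1 : Int.fract (((i:ℝ) + ((1:ℕ) : ℝ)) * α) < β
  · left
    have hmem : (1 : ℕ) ∈ {e : ℕ | 0 < e ∧ Int.fract (((i : ℝ) + (e : ℝ)) * α) < β} :=
      ⟨one_pos, h1⟩
    have hle : gap i ≤ 1 := Nat.sInf_le hmem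
    have hpos : 0 < gap i := (Nat.sInf_mem ⟨1, hmem⟩).1
    omega
  · right
    have hxa1 : x + α < 1 := by
      rcases lt_trichotomy (x + α) 1 with h | h | h
      · exact h
      · exact absurd h ne1
      · exfalso
        apply h1
        rw [key 1]
        have heq : Int.fract (x + (1:ℕ) * α) = x + α - 1 := by
          push_cast
          rw [one_mul, frac_of_Ico _ (le_of_lt h) (by linarith)]
        rw [heq]
        linarith
    have hf1 : Int.fract (((i:ℝ) + ((1:ℕ) : ℝ)) * α) = x + α := by
      rw [key 1]
      push_cast
      rw [one_mul, Int.fract_eq_self.2 ⟨by linarith, hxa1⟩]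
    have hβle : β ≤ x + α := by
      rw [hf1] at h1; linarith [not_lt.mp h1]
    have hf2 : Int.fract (((i:ℝ) + ((2:ℕ) : ℝ)) * α) = x + 2*α - 1 := by
      rw [key 2]
      push_cast
      rw [frac_of_Ico _ (by linarith) (by linarith)]
    have hmem2 : (2 : ℕ) ∈ {e : ℕ | 0 < e ∧ Int.fract (((i : ℝ) + (e : ℝ)) * α) < β} := by
      refine ⟨two_pos, ?_⟩
      rw [show ((2:ℕ):ℝ) = ((2:ℕ):ℝ) from rfl, hf2]
      linarith
    have hle : gap i ≤ 2 := Nat.sInf_le hmem2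
    have hmemInf := Nat.sInf_mem (⟨2, hmem2⟩ : Set.Nonempty _)
    have hpos : 0 < gap i := hmemInf.1
    have hne1 : gap i ≠ 1 := by
      intro h
      apply h1
      have hm : gap i ∈ {e : ℕ | 0 < e ∧ Int.fract (((i : ℝ) + (e : ℝ)) * α) < β} := hmemInf
      rw [h] at hm
      exact hm.2
    omega
end

section
/- Let α ∈ (0,1) be irrational and β ∈ (0,1) with β ≥ max(α, 1 − α). For every natural number i with {iα} < β: the gap after i equals 1 if and only if {iα} ∈ [0, β − α) ∪ [1 − α, β), and the gap after i equals 2 if and only if {iα} ∈ [β − α, 1 − α). -/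
/-- **Three gap theorem, case 1**, precise description: for `{iα} < β`
(with `β ≥ max(α, 1-α)`), the gap after `i` is `1` iff
`{iα} ∈ [0, β-α) ∪ [1-α, β)`, and `2` iff `{iα} ∈ [β-α, 1-α)`. -/
theorem three_gap_case_one_description
    (α β : ℝ) (hα : α ∈ Set.Ioo (0 : ℝ) 1) (hirr : Irrational α)
    (hβ : β ∈ Set.Ioo (0 : ℝ) 1) (hβmax : max α (1 - α) ≤ β) :
    let gap : ℕ → ℕ := fun i => sInf {e : ℕ | 0 < e ∧ Int.fract (((i : ℝ) + (e : ℝ)) * α) < β}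
    ∀ i : ℕ, Int.fract ((i : ℝ) * α) < β →
      (gap i = 1 ↔ Int.fract ((i : ℝ) * α) ∈ Set.Ico (0 : ℝ) (β - α) ∪ Set.Ico (1 - α) β) ∧
      (gap i = 2 ↔ Int.fract ((i : ℝ) * α) ∈ Set.Ico (β - α) (1 - α)) := by
  intro gap i hi
  obtain ⟨hα0, hα1⟩ := hα
  obtain ⟨hβ0, hβ1⟩ := hβ
  have hαβ : α ≤ β := le_trans (le_max_left _ _) hβmax
  have h1αβ : 1 - α ≤ β := le_trans (le_max_right _ _) hβmax
  set x := Int.fract ((i : ℝ) * α) with hxdef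
  have hx0 : 0 ≤ x := Int.fract_nonneg _
  have key : ∀ e : ℕ, Int.fract (((i : ℝ) + (e : ℝ)) * α) = Int.fract (x + e * α) := by
    intro e
    have h : ((i : ℝ) + (e : ℝ)) * α = (⌊(i : ℝ) * α⌋ : ℝ) + (x + e * α) := by
      rw [hxdef, Int.fract]; ring
    rw [h, Int.fract_intCast_add]
  set S := {e : ℕ | 0 < e ∧ Int.fract (((i : ℝ) + (e : ℝ)) * α) < β} with hSdef
  have hgap : gap i = sInf S := rfl
  rcases lt_or_ge x (β - α) with hA | hBC
  · -- case A: x < β - α, gap = 1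
    have h1 : (1 : ℕ) ∈ S := by
      refine ⟨one_pos, ?_⟩
      rw [key 1]
      push_cast
      rw [one_mul, Int.fract_eq_self.mpr ⟨by linarith, by linarith⟩]
      linarith
    have hle : sInf S ≤ 1 := Nat.sInf_le h1
    have hmem := Nat.sInf_mem ⟨1, h1⟩
    have hpos : 0 < sInf S := hmem.1
    have hg1 : gap i = 1 := by rw [hgap]; omega
    constructor
    · simp only [hg1, Set.mem_union, Set.mem_Ico]
      exact ⟨fun _ => Or.inl ⟨hx0, hA⟩, fun _ => trivial⟩
    · simp only [hg1, Set.mem_Ico]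
      constructor
      · intro h; omega
      · intro ⟨h1', _⟩; linarith
  rcases lt_or_ge x (1 - α) with hB | hC
  · -- case B: β - α ≤ x < 1 - α, gap = 2
    have h1not : (1 : ℕ) ∉ S := by
      intro ⟨_, h⟩
      rw [key 1] at h
      push_cast at h
      rw [one_mul, Int.fract_eq_self.mpr ⟨by linarith, by linarith⟩] at h
      linarith
    have h2 : (2 : ℕ) ∈ S := by
      refine ⟨by norm_num, ?_⟩
      rw [key 2]
      push_cast
      have : x + 2 * α = (x + 2 * α - 1) + 1 := by ring
      rw [this, Int.fract_add_one,
        Int.fract_eq_self.mpr ⟨by linarith, by linarith⟩]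
      linarith
    have hle : sInf S ≤ 2 := Nat.sInf_le h2
    have hmem := Nat.sInf_mem ⟨2, h2⟩
    have hpos : 0 < sInf S := hmem.1
    have hne1 : sInf S ≠ 1 := fun h => h1not (h ▸ hmem)
    have hg2 : gap i = 2 := by rw [hgap]; omega
    constructor
    · simp only [hg2, Set.mem_union, Set.mem_Ico]
      constructor
      · intro h; omega
      · rintro (⟨_, h⟩ | ⟨h, _⟩) <;> linarith
    · simp only [hg2, Set.mem_Ico]
      exact ⟨fun _ => ⟨hBC, hB⟩, fun _ => trivial⟩
  · -- case C: 1 - α ≤ x, gap = 1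
    have h1 : (1 : ℕ) ∈ S := by
      refine ⟨one_pos, ?_⟩
      rw [key 1]
      push_cast
      rw [one_mul]
      have : x + α = (x + α - 1) + 1 := by ring
      rw [this, Int.fract_add_one,
        Int.fract_eq_self.mpr ⟨by linarith, by linarith⟩]
      linarith
    have hle : sInf S ≤ 1 := Nat.sInf_le h1
    have hmem := Nat.sInf_mem ⟨1, h1⟩
    have hpos : 0 < sInf S := hmem.1
    have hg1 : gap i = 1 := by rw [hgap]; omega
    constructor
    · simp only [hg1, Set.mem_union, Set.mem_Ico]
      exact ⟨fun _ => Or.inr ⟨hC, hi⟩, fun _ => trivial⟩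
    · simp only [hg1, Set.mem_Ico]
      constructor
      · intro h; omega
      · intro ⟨_, h2'⟩; linarith
end

section
/- Let α ∈ (0,1) be irrational and β ∈ (0,1) with β ≥ max(α, 1 − α). Then, as N → ∞, (1/N)·#{ i ∈ {0,…,N−1} : {iα} < β and the gap after i equals 1 } tends to 2β − 1, and (1/N)·#{ i ∈ {0,…,N−1} : {iα} < β and the gap after i equals 2 } tends to 1 − β. -/
open Filter


noncomputable def cnt (α : ℝ) (s : Set ℝ) (N : ℕ) : ℕ :=
  {i : ℕ | i < N ∧ Int.fract ((i : ℝ) * α) ∈ s}.ncard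

lemma setOf_lt_finite (N : ℕ) (p : ℕ → Prop) : {i : ℕ | i < N ∧ p i}.Finite :=
  (Set.finite_Iio N).subset (fun _ hi => hi.1)

lemma fract_add_fract (a b : ℝ) :
    Int.fract (a + b) = Int.fract (Int.fract a + Int.fract b) := by
  have h : a + b = (Int.fract a + Int.fract b) + ((⌊a⌋ + ⌊b⌋ : ℤ) : ℝ) := by
    rw [Int.fract, Int.fract]; push_cast; ring
  rw [h, Int.fract_add_intCast]

lemma fract_shift (α : ℝ) (i k : ℕ) :
    Int.fract ((↑(i + k) : ℝ) * α) =
      Int.fract (Int.fract ((i : ℝ) * α) + Int.fract ((k : ℝ) * α)) := by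
  push_cast
  rw [add_mul, fract_add_fract]

lemma ncard_Ico_nat (a b : ℕ) : (Set.Ico a b).ncard = b - a := by
  rw [← Finset.coe_Ico, Set.ncard_coe_finset, Nat.card_Ico]

lemma ncard_Iio_nat (a : ℕ) : (Set.Iio a).ncard = a := by
  rw [← Finset.coe_Iio, Set.ncard_coe_finset, Nat.card_Iio]

lemma card_shift (p : ℕ → Prop) (k N : ℕ) :
    {i : ℕ | i < N ∧ p (i + k)}.ncard ≤ {i : ℕ | i < N ∧ p i}.ncard + k ∧
    {i : ℕ | i < N ∧ p i}.ncard ≤ {i : ℕ | i < N ∧ p (i + k)}.ncard + k := by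
  have himg : (· + k) '' {i : ℕ | i < N ∧ p (i + k)} = {j : ℕ | k ≤ j ∧ j < N + k ∧ p j} := by
    ext j
    simp only [Set.mem_image, Set.mem_setOf_eq]
    constructor
    · rintro ⟨i, ⟨hi, hp⟩, rfl⟩; exact ⟨Nat.le_add_left _ _, by omega, hp⟩
    · rintro ⟨h1, h2, hp⟩
      exact ⟨j - k, ⟨by omega, by rw [Nat.sub_add_cancel h1]; exact hp⟩, Nat.sub_add_cancel h1⟩
  have hcard : {i : ℕ | i < N ∧ p (i + k)}.ncard = {j : ℕ | k ≤ j ∧ j < N + k ∧ p j}.ncard := by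
    rw [← himg, Set.ncard_image_of_injective _ (add_left_injective k)]
  have hfinA : {j : ℕ | k ≤ j ∧ j < N + k ∧ p j}.Finite :=
    (Set.finite_Iio (N + k)).subset (fun _ hi => hi.2.1)
  constructor
  · rw [hcard]
    calc {j : ℕ | k ≤ j ∧ j < N + k ∧ p j}.ncard
        ≤ ({i : ℕ | i < N ∧ p i} ∪ Set.Ico N (N + k)).ncard := by
          apply Set.ncard_le_ncard
          · rintro j ⟨h1, h2, hp⟩
            rcases lt_or_ge j N with h | h
            · exact Or.inl ⟨h, hp⟩
            · exact Or.inr ⟨h, h2⟩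
          · exact (setOf_lt_finite N p).union (Set.finite_Ico _ _)
      _ ≤ {i : ℕ | i < N ∧ p i}.ncard + (Set.Ico N (N + k)).ncard := Set.ncard_union_le _ _
      _ ≤ {i : ℕ | i < N ∧ p i}.ncard + k := by rw [ncard_Ico_nat]; omega
  · rw [hcard]
    calc {i : ℕ | i < N ∧ p i}.ncard
        ≤ ({j : ℕ | k ≤ j ∧ j < N + k ∧ p j} ∪ Set.Iio k).ncard := by
          apply Set.ncard_le_ncard
          · rintro i ⟨h1, hp⟩
            rcases lt_or_ge i k with h | h
            · exact Or.inr h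
            · exact Or.inl ⟨h, by omega, hp⟩
          · exact hfinA.union (Set.finite_Iio _)
      _ ≤ {j : ℕ | k ≤ j ∧ j < N + k ∧ p j}.ncard + (Set.Iio k).ncard := Set.ncard_union_le _ _
      _ = {j : ℕ | k ≤ j ∧ j < N + k ∧ p j}.ncard + k := by rw [ncard_Iio_nat]

lemma cnt_le_cnt_fwd (α : ℝ) (s s' : Set ℝ) (k : ℕ)
    (h : ∀ i : ℕ, Int.fract ((i : ℝ) * α) ∈ s → Int.fract ((↑(i + k) : ℝ) * α) ∈ s') (N : ℕ) :
    cnt α s N ≤ cnt α s' N + k := by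
  unfold cnt
  calc {i : ℕ | i < N ∧ Int.fract ((i : ℝ) * α) ∈ s}.ncard
      ≤ {i : ℕ | i < N ∧ Int.fract ((↑(i + k) : ℝ) * α) ∈ s'}.ncard :=
        Set.ncard_le_ncard (fun i hi => ⟨hi.1, h i hi.2⟩) (setOf_lt_finite N _)
    _ ≤ _ + k := (card_shift (fun i => Int.fract ((i : ℝ) * α) ∈ s') k N).1

lemma cnt_le_cnt_bwd (α : ℝ) (s s' : Set ℝ) (k : ℕ)
    (h : ∀ i : ℕ, Int.fract ((↑(i + k) : ℝ) * α) ∈ s → Int.fract ((i : ℝ) * α) ∈ s') (N : ℕ) :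
    cnt α s N ≤ cnt α s' N + k := by
  unfold cnt
  calc {i : ℕ | i < N ∧ Int.fract ((i : ℝ) * α) ∈ s}.ncard
      ≤ {i : ℕ | i < N ∧ Int.fract ((↑(i + k) : ℝ) * α) ∈ s}.ncard + k :=
        (card_shift (fun i => Int.fract ((i : ℝ) * α) ∈ s) k N).2
    _ ≤ {i : ℕ | i < N ∧ Int.fract ((i : ℝ) * α) ∈ s'}.ncard + k := by
        gcongr
        · exact setOf_lt_finite N _
        · exact h _

lemma cnt_mono (α : ℝ) {s s' : Set ℝ} (h : s ⊆ s') (N : ℕ) : cnt α s N ≤ cnt α s' N :=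
  Set.ncard_le_ncard (fun i hi => ⟨hi.1, h hi.2⟩) (setOf_lt_finite N _)

lemma cnt_union (α : ℝ) {s s' : Set ℝ} (h : Disjoint s s') (N : ℕ) :
    cnt α (s ∪ s') N = cnt α s N + cnt α s' N := by
  unfold cnt
  rw [← Set.ncard_union_eq (s := {i : ℕ | i < N ∧ Int.fract ((i : ℝ) * α) ∈ s})
      (t := {i : ℕ | i < N ∧ Int.fract ((i : ℝ) * α) ∈ s'}) ?_ (setOf_lt_finite N _)
      (setOf_lt_finite N _)]
  · congr 1
    ext i
    simp only [Set.mem_setOf_eq, Set.mem_union, Set.mem_setOf_eq, and_or_left]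
  · rw [Set.disjoint_left]
    rintro i ⟨_, hi⟩ ⟨_, hi'⟩
    exact Set.disjoint_left.1 h hi hi'

lemma cnt_Ico_add (α : ℝ) {u v w : ℝ} (h1 : u ≤ v) (h2 : v ≤ w) (N : ℕ) :
    cnt α (Set.Ico u w) N = cnt α (Set.Ico u v) N + cnt α (Set.Ico v w) N := by
  rw [← Set.Ico_union_Ico_eq_Ico h1 h2, cnt_union]
  rw [Set.Ico_disjoint_Ico]
  simp [min_le_iff, le_max_iff, le_refl]

lemma cnt_total (α : ℝ) (N : ℕ) : cnt α (Set.Ico 0 1) N = N := by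
  unfold cnt
  have : {i : ℕ | i < N ∧ Int.fract ((i : ℝ) * α) ∈ Set.Ico (0:ℝ) 1} = Set.Iio N := by
    ext i
    simp only [Set.mem_setOf_eq, Set.mem_Iio, Set.mem_Ico, and_iff_left_iff_imp]
    exact fun _ => ⟨Int.fract_nonneg _, Int.fract_lt_one _⟩
  rw [this, ncard_Iio_nat]

lemma cnt_le (α : ℝ) (s : Set ℝ) (N : ℕ) : cnt α s N ≤ N := by
  have := cnt_mono α (s := s ∩ Set.Ico 0 1) (s' := Set.Ico 0 1) Set.inter_subset_right N
  rw [cnt_total] at this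
  refine le_trans (le_of_eq ?_) this
  unfold cnt
  congr 1
  ext i
  simp only [Set.mem_setOf_eq, Set.mem_inter_iff, Set.mem_Ico, and_congr_right_iff]
  exact fun _ => (and_iff_left ⟨Int.fract_nonneg _, Int.fract_lt_one _⟩).symm

section Density
variable {α : ℝ} (hirr : Irrational α)
include hirr

lemma fract_irrational (m : ℕ) (hm : m ≠ 0) : Irrational (Int.fract ((m : ℝ) * α)) := by
  rw [Int.fract]
  exact (hirr.natCast_mul hm).sub_intCast _

lemma fract_pos (m : ℕ) (hm : m ≠ 0) : 0 < Int.fract ((m : ℝ) * α) := by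
  refine lt_of_le_of_ne (Int.fract_nonneg _) (Ne.symm ?_)
  simpa using (fract_irrational hirr m hm).ne_int 0

lemma fract_ne_fract {i j : ℕ} (hne : i ≠ j) :
    Int.fract ((i : ℝ) * α) ≠ Int.fract ((j : ℝ) * α) := by
  intro h
  rw [Int.fract_eq_fract] at h
  obtain ⟨z, hz⟩ := h
  have h2 : (((i : ℤ) - (j : ℤ)) : ℝ) * α = (z : ℝ) := by push_cast at hz ⊢; linarith [hz]
  have h3 : Irrational ((((i : ℤ) - (j : ℤ)) : ℝ) * α) := by
    have : ((i : ℤ) - (j : ℤ)) ≠ 0 := by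
      simp only [sub_ne_zero]; exact_mod_cast hne
    exact_mod_cast hirr.intCast_mul this
  exact h3.ne_int z h2

lemma exists_small {ε : ℝ} (hε : 0 < ε) :
    ∃ m : ℕ, m ≠ 0 ∧
      (Int.fract ((m : ℝ) * α) < ε ∨ 1 - ε < Int.fract ((m : ℝ) * α)) := by
  have key : ∀ a b : ℕ, a < b → |Int.fract ((b : ℝ) * α) - Int.fract ((a : ℝ) * α)| < ε →
      ∃ m : ℕ, m ≠ 0 ∧
        (Int.fract ((m : ℝ) * α) < ε ∨ 1 - ε < Int.fract ((m : ℝ) * α)) := by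
    intro a b hab habs
    set d := Int.fract ((b : ℝ) * α) - Int.fract ((a : ℝ) * α) with hd
    have hd0 : d ≠ 0 := sub_ne_zero.2 (fract_ne_fract hirr (by omega))
    have hdlt : d < 1 := by
      have h1 := Int.fract_lt_one ((b : ℝ) * α)
      have h2 := Int.fract_nonneg ((a : ℝ) * α)
      simp only [hd]; linarith
    have hdgt : -1 < d := by
      have h1 := Int.fract_nonneg ((b : ℝ) * α)
      have h2 := Int.fract_lt_one ((a : ℝ) * α)
      simp only [hd]; linarith
    have habs' := abs_lt.1 habs
    refine ⟨b - a, by omega, ?_⟩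
    have hfr : Int.fract ((↑(b - a) : ℝ) * α) = Int.fract d := by
      have hcast : ((b - a : ℕ) : ℝ) = (b : ℝ) - (a : ℝ) := by
        push_cast [Nat.cast_sub hab.le]; ring
      rw [hcast, sub_mul]
      have heq : (b : ℝ) * α - (a : ℝ) * α = d + ((⌊(b : ℝ) * α⌋ - ⌊(a : ℝ) * α⌋ : ℤ) : ℝ) := by
        simp only [hd, Int.fract]; push_cast; ring
      rw [heq, Int.fract_add_intCast]
    rcases lt_or_gt_of_ne hd0 with hneg | hpos
    · right
      rw [hfr]
      have h1 : Int.fract d = d + 1 := by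
        have h2 : Int.fract d = Int.fract (d + 1) := by
          rw [show d + 1 = d + ((1 : ℤ) : ℝ) by push_cast; ring, Int.fract_add_intCast]
        rw [h2]
        exact Int.fract_eq_self.2 ⟨by linarith, by linarith⟩
      rw [h1]; linarith [habs'.1]
    · left
      rw [hfr, Int.fract_eq_self.2 ⟨hpos.le, hdlt⟩]
      linarith [habs'.2]
  obtain ⟨n, hn⟩ := exists_nat_one_div_lt hε
  set n' := n + 1 with hn'
  have hn'pos : (0 : ℝ) < n' := by positivity
  have hmaps : ∀ i ∈ Finset.range (n' + 1),
      (⌊Int.fract ((i : ℝ) * α) * n'⌋.toNat) ∈ Finset.range n' := by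
    intro i _
    simp only [Finset.mem_range]
    have h1 : Int.fract ((i : ℝ) * α) * n' < n' := by
      have := Int.fract_lt_one ((i : ℝ) * α)
      nlinarith
    have hflt : ⌊Int.fract ((i : ℝ) * α) * n'⌋ < (n' : ℤ) := Int.floor_lt.2 (by exact_mod_cast h1)
    have hfnn : (0 : ℤ) ≤ ⌊Int.fract ((i : ℝ) * α) * n'⌋ :=
      Int.floor_nonneg.2 (mul_nonneg (Int.fract_nonneg _) hn'pos.le)
    omega
  obtain ⟨i, hi, j, hj, hne, heq⟩ :=
    Finset.exists_ne_map_eq_of_card_lt_of_maps_to (by simp) hmaps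
  have heq' : ⌊Int.fract ((i : ℝ) * α) * n'⌋ = ⌊Int.fract ((j : ℝ) * α) * n'⌋ := by
    have h1 : (0 : ℤ) ≤ ⌊Int.fract ((i : ℝ) * α) * n'⌋ :=
      Int.floor_nonneg.2 (mul_nonneg (Int.fract_nonneg _) hn'pos.le)
    have h2 : (0 : ℤ) ≤ ⌊Int.fract ((j : ℝ) * α) * n'⌋ :=
      Int.floor_nonneg.2 (mul_nonneg (Int.fract_nonneg _) hn'pos.le)
    omega
  have hbnd : ∀ a b : ℕ, ⌊Int.fract ((a : ℝ) * α) * n'⌋ = ⌊Int.fract ((b : ℝ) * α) * n'⌋ →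
      |Int.fract ((b : ℝ) * α) - Int.fract ((a : ℝ) * α)| < ε := by
    intro a b hab
    set x := Int.fract ((a : ℝ) * α)
    set y := Int.fract ((b : ℝ) * α)
    have h1 : (⌊x * n'⌋ : ℝ) ≤ x * n' := Int.floor_le _
    have h2 : x * n' < ⌊x * n'⌋ + 1 := Int.lt_floor_add_one _
    have h3 : (⌊y * n'⌋ : ℝ) ≤ y * n' := Int.floor_le _
    have h4 : y * n' < ⌊y * n'⌋ + 1 := Int.lt_floor_add_one _
    rw [hab] at h1 h2
    have hinv : (1 / (n' : ℝ)) * n' = 1 := by field_simp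
    have h6 : |y - x| < 1 / n' := by
      rw [abs_lt]
      constructor <;> nlinarith
    calc |y - x| < 1 / n' := h6
      _ < ε := by exact_mod_cast hn
  rcases hne.lt_or_gt with h | h
  · exact key i j h (hbnd i j heq')
  · exact key j i h (hbnd j i heq'.symm)

omit hirr in
lemma exists_mult {θ a b : ℝ} (hθ : 0 < θ) (hab : θ < b - a) (ha : 0 ≤ a) :
    ∃ j : ℕ, a < (j : ℝ) * θ ∧ (j : ℝ) * θ < b := by
  have h0 : (0 : ℤ) ≤ ⌊a / θ⌋ := Int.floor_nonneg.2 (by positivity)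
  have hc : ((⌊a / θ⌋.toNat + 1 : ℕ) : ℝ) = (⌊a / θ⌋ : ℝ) + 1 := by
    have h' : ((⌊a / θ⌋.toNat : ℤ) : ℝ) = ((⌊a / θ⌋ : ℤ) : ℝ) := by
      exact_mod_cast congrArg (fun z : ℤ => (z : ℝ)) (Int.toNat_of_nonneg h0)
    push_cast at h' ⊢
    linarith
  refine ⟨⌊a / θ⌋.toNat + 1, ?_, ?_⟩
  · rw [hc]
    have h1 : a / θ < (⌊a / θ⌋ : ℝ) + 1 := Int.lt_floor_add_one _
    rw [div_lt_iff₀ hθ] at h1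
    linarith
  · rw [hc]
    have h1 : (⌊a / θ⌋ : ℝ) ≤ a / θ := Int.floor_le _
    have h2 : ((⌊a / θ⌋ : ℝ) + 1) * θ ≤ (a / θ + 1) * θ := by nlinarith
    have h3 : (a / θ + 1) * θ = a + θ := by field_simp
    linarith

lemma exists_fract_btwn {a b : ℝ} (ha : 0 ≤ a) (hab : a < b) (hb : b ≤ 1) :
    ∃ k : ℕ, Int.fract ((k : ℝ) * α) ∈ Set.Ioo a b := by
  set c := (a + b) / 2 with hc
  have hac : a < c := by simp only [hc]; linarith
  have hcb : c < b := by simp only [hc]; linarith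
  have hc1 : c < 1 := by linarith
  have hε : (0 : ℝ) < c - a := by linarith
  obtain ⟨m, hm, hcase⟩ := exists_small hirr hε
  set θ := Int.fract ((m : ℝ) * α) with hθ
  have hθpos : 0 < θ := fract_pos hirr m hm
  have hθlt : θ < 1 := Int.fract_lt_one _
  have key : ∀ j : ℕ, Int.fract ((↑(j * m) : ℝ) * α) = Int.fract ((j : ℝ) * θ) := by
    intro j
    have heq : ((j * m : ℕ) : ℝ) * α = (j : ℝ) * θ + (((j : ℤ) * ⌊(m : ℝ) * α⌋ : ℤ) : ℝ) := by
      simp only [hθ, Int.fract]; push_cast; ring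
    rw [heq, Int.fract_add_intCast]
  rcases hcase with hsml | hbig
  · obtain ⟨j, hj1, hj2⟩ := exists_mult (a := a) (b := c) hθpos (by linarith) ha
    refine ⟨j * m, ?_⟩
    rw [key j, Int.fract_eq_self.2 ⟨by positivity, by linarith⟩]
    exact ⟨hj1, by linarith⟩
  · set θ' := 1 - θ with hθ'
    have hθ'pos : 0 < θ' := by simp only [hθ']; linarith
    obtain ⟨j, hj1, hj2⟩ := exists_mult (a := 1 - c) (b := 1 - a) hθ'pos
      (by simp only [hθ']; linarith) (by linarith)
    refine ⟨j * m, ?_⟩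
    have heq2 : Int.fract ((↑(j * m) : ℝ) * α) = Int.fract (-((j : ℝ) * θ')) := by
      have h3 : (j : ℝ) * θ = -((j : ℝ) * θ') + ((j : ℤ) : ℝ) := by
        simp only [hθ']; push_cast; ring
      rw [key j, h3, Int.fract_add_intCast]
    have hval : Int.fract (-((j : ℝ) * θ')) = 1 - (j : ℝ) * θ' := by
      rw [show -((j : ℝ) * θ') = (1 - (j : ℝ) * θ') + ((-1 : ℤ) : ℝ) by push_cast; ring,
        Int.fract_add_intCast]
      exact Int.fract_eq_self.2 ⟨by linarith, by linarith⟩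
    rw [heq2, hval]
    constructor <;> [linarith; linarith]

end Density

lemma cnt_empty (α : ℝ) (N : ℕ) : cnt α ∅ N = 0 := by
  unfold cnt
  convert Set.ncard_empty ℕ using 2
  simp

section Trans
variable {α : ℝ} (hirr : Irrational α)
include hirr

lemma trans_high {u v lam : ℝ} (hu : 0 < u) (huv : u ≤ v) (hv : v ≤ 1) (hlam : v - u < lam) :
    ∃ k : ℕ, ∀ N, cnt α (Set.Ico u v) N ≤ cnt α (Set.Ico 0 lam) N + k := by
  set ε := lam - (v - u) with hε
  obtain ⟨k, hk⟩ := exists_fract_btwn hirr (a := 1 - u) (b := min 1 (1 - u + ε))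
    (by linarith) (lt_min (by linarith) (by simp only [hε]; linarith)) (min_le_left _ _)
  rw [Set.mem_Ioo, lt_min_iff] at hk
  refine ⟨k, fun N => cnt_le_cnt_fwd α _ _ k ?_ N⟩
  intro i hi
  rw [Set.mem_Ico] at hi
  set x := Int.fract ((i : ℝ) * α) with hx
  set t := Int.fract ((k : ℝ) * α) with ht
  rw [fract_shift]
  have hx1 : x < 1 := Int.fract_lt_one _
  have heq : Int.fract (x + t) = x + t - 1 := by
    have h2 : Int.fract (x + t) = Int.fract (x + t - 1) := by
      rw [show x + t - 1 = (x + t) + ((-1 : ℤ) : ℝ) by push_cast; ring, Int.fract_add_intCast]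
    rw [h2]
    refine Int.fract_eq_self.2 ⟨by linarith [hk.1, hi.1], by linarith [hk.2.1]⟩
  rw [← hx, ← ht, heq]
  exact ⟨by linarith [hk.1, hi.1], by linarith [hk.2.2, hi.2]⟩

lemma trans_low {u v lam : ℝ} (hu : 0 ≤ u) (hu1 : u < 1) (hv : v ≤ 1) (hlam0 : 0 ≤ lam)
    (hlam : lam < v - u) :
    ∃ k : ℕ, ∀ N, cnt α (Set.Ico 0 lam) N ≤ cnt α (Set.Ico u v) N + k := by
  rcases eq_or_lt_of_le hu with rfl | hupos
  · exact ⟨0, fun N => by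
      simpa using cnt_mono α (Set.Ico_subset_Ico le_rfl (by linarith)) N⟩
  · set ε := v - u - lam with hε
    have hεpos : 0 < ε := by simp only [hε]; linarith
    obtain ⟨k, hk⟩ := exists_fract_btwn hirr (a := max 0 (1 - u - ε)) (b := 1 - u)
      (le_max_left _ _) (max_lt (by linarith) (by linarith)) (by linarith)
    rw [Set.mem_Ioo, max_lt_iff] at hk
    refine ⟨k, fun N => cnt_le_cnt_bwd α _ _ k ?_ N⟩
    intro i hi
    rw [fract_shift] at hi
    rw [Set.mem_Ico] at hi ⊢
    set x := Int.fract ((i : ℝ) * α) with hx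
    set t := Int.fract ((k : ℝ) * α) with ht
    have hx0 : 0 ≤ x := Int.fract_nonneg _
    have hx1 : x < 1 := Int.fract_lt_one _
    have ht1 : t < 1 - u := hk.2
    have ht2 : 1 - u - ε < t := hk.1.2
    rcases lt_or_ge (x + t) 1 with hlt | hge
    · exfalso
      rw [Int.fract_eq_self.2 ⟨by linarith [Int.fract_nonneg ((k:ℝ)*α)], hlt⟩] at hi
      have : t < lam := by linarith [hi.2, hx0]
      simp only [hε] at ht2
      linarith
    · have heq : Int.fract (x + t) = x + t - 1 := by
        have h2 : Int.fract (x + t) = Int.fract (x + t - 1) := by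
          rw [show x + t - 1 = (x + t) + ((-1 : ℤ) : ℝ) by push_cast; ring, Int.fract_add_intCast]
        rw [h2]
        refine Int.fract_eq_self.2 ⟨by linarith, by linarith⟩
      rw [heq] at hi
      constructor
      · linarith [hi.1]
      · simp only [hε] at ht2
        linarith [hi.2]

omit hirr in
lemma cnt_tele (α : ℝ) {l : ℝ} (hl : 0 < l) (m N : ℕ) :
    cnt α (Set.Ico 0 ((m : ℝ) * l)) N
      = ∑ r ∈ Finset.range m, cnt α (Set.Ico ((r : ℝ) * l) (((r : ℝ) + 1) * l)) N := by
  induction m with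
  | zero => simp only [Nat.cast_zero, zero_mul, Set.Ico_self, Finset.range_zero,
      Finset.sum_empty, cnt_empty]
  | succ m ih =>
      rw [Finset.sum_range_succ, ← ih]
      have hcast : ((m + 1 : ℕ) : ℝ) * l = ((m : ℝ) + 1) * l := by push_cast; ring
      rw [hcast, cnt_Ico_add α (u := 0) (v := (m : ℝ) * l) (w := ((m : ℝ) + 1) * l)
        (by positivity) (by nlinarith) N]

lemma up_small {l lam : ℝ} (hlam0 : 0 ≤ lam) (hlaml : lam < l) (n : ℕ)
    (hnl : (n : ℝ) * l ≤ 1) :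
    ∃ K : ℕ, ∀ N, n * cnt α (Set.Ico 0 lam) N ≤ N + K := by
  have hl : 0 < l := lt_of_le_of_lt hlam0 hlaml
  have piece : ∀ r : ℕ, ∃ k : ℕ, r < n → ∀ N,
      cnt α (Set.Ico 0 lam) N ≤ cnt α (Set.Ico ((r : ℝ) * l) (((r : ℝ) + 1) * l)) N + k := by
    intro r
    by_cases hr : r < n
    · have hrn : (r : ℝ) + 1 ≤ n := by exact_mod_cast Nat.succ_le_of_lt hr
      obtain ⟨k, hk⟩ := trans_low hirr (u := (r : ℝ) * l) (v := ((r : ℝ) + 1) * l)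
        (by positivity) (by nlinarith) (by nlinarith) hlam0 (by nlinarith)
      exact ⟨k, fun _ => hk⟩
    · exact ⟨0, fun h => absurd h hr⟩
  choose k hk using piece
  refine ⟨∑ r ∈ Finset.range n, k r, fun N => ?_⟩
  calc n * cnt α (Set.Ico 0 lam) N
      = ∑ r ∈ Finset.range n, cnt α (Set.Ico 0 lam) N := by
        rw [Finset.sum_const, Finset.card_range, smul_eq_mul]
    _ ≤ ∑ r ∈ Finset.range n, (cnt α (Set.Ico ((r : ℝ) * l) (((r : ℝ) + 1) * l)) N + k r) := by
        apply Finset.sum_le_sum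
        intro r hr
        exact hk r (Finset.mem_range.1 hr) N
    _ = (∑ r ∈ Finset.range n, cnt α (Set.Ico ((r : ℝ) * l) (((r : ℝ) + 1) * l)) N)
          + ∑ r ∈ Finset.range n, k r := Finset.sum_add_distrib
    _ ≤ N + ∑ r ∈ Finset.range n, k r := by
        gcongr
        rw [← cnt_tele α hl n N]
        calc cnt α (Set.Ico 0 ((n : ℝ) * l)) N
            ≤ cnt α (Set.Ico 0 1) N := cnt_mono α (Set.Ico_subset_Ico le_rfl hnl) N
          _ = N := cnt_total α N

end Trans

section Main
variable {α : ℝ} (hirr : Irrational α)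
include hirr

set_option maxHeartbeats 800000 in
lemma upper_main {c η : ℝ} (hc0 : 0 ≤ c) (hc1 : c ≤ 1) (hη : 0 < η) :
    ∃ K : ℝ, ∀ N : ℕ, (cnt α (Set.Ico 0 c) N : ℝ) ≤ (c + η) * N + K := by
  obtain ⟨n, hn⟩ := exists_nat_ge ((1 + 2 * c + 2 * η) / η + 3)
  have hpos : (0 : ℝ) < (1 + 2 * c + 2 * η) / η := by positivity
  have hn3 : 3 ≤ n := by
    have : (3 : ℝ) ≤ (n : ℝ) := by linarith
    exact_mod_cast this
  have hnR : (0 : ℝ) < (n : ℝ) := by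
    have : (3 : ℝ) ≤ (n : ℝ) := by linarith
    linarith
  set lam := 1 / (n : ℝ) + 1 / (n : ℝ) ^ 2 with hlam
  set l := 1 / (n : ℝ) + 2 / (n : ℝ) ^ 2 with hl
  have hn2 : (0 : ℝ) < (n : ℝ) ^ 2 := by positivity
  have hinv2 : (0 : ℝ) < 1 / (n : ℝ) ^ 2 := by positivity
  have h2eq : 2 / (n : ℝ) ^ 2 = 1 / (n : ℝ) ^ 2 + 1 / (n : ℝ) ^ 2 := by ring
  have hlaml : lam < l := by rw [hlam, hl, h2eq]; linarith
  have hlam0 : 0 ≤ lam := by rw [hlam]; positivity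
  set n' := n - 2 with hn'
  have hn'cast : ((n' : ℕ) : ℝ) = (n : ℝ) - 2 := by
    rw [hn', Nat.cast_sub (by omega)]; norm_num
  have hn'R : (0 : ℝ) < ((n' : ℕ) : ℝ) := by rw [hn'cast]; linarith
  have hn'l : ((n' : ℕ) : ℝ) * l ≤ 1 := by
    have heq : ((n' : ℕ) : ℝ) * l = 1 - 4 / (n : ℝ) ^ 2 := by
      rw [hn'cast, hl]; field_simp; ring
    rw [heq]
    have : (0 : ℝ) ≤ 4 / (n : ℝ) ^ 2 := by positivity
    linarith
  obtain ⟨K₀, hK₀⟩ := up_small hirr hlam0 hlaml n' hn'l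
  set q := ⌈c * n⌉₊ with hq
  have hqn : q ≤ n := Nat.ceil_le.2 (by nlinarith)
  have hcq : c ≤ (q : ℝ) * (1 / (n : ℝ)) := by
    rw [mul_one_div, le_div_iff₀ hnR]
    exact Nat.le_ceil _
  have hqc : (q : ℝ) ≤ c * n + 1 := by
    have := Nat.ceil_lt_add_one (by positivity : (0:ℝ) ≤ c * n)
    linarith
  clear_value lam l n' q
  have piece : ∀ r : ℕ, ∃ k : ℕ, r < q → ∀ N,
      cnt α (Set.Ico ((r : ℝ) * (1 / (n : ℝ))) (((r : ℝ) + 1) * (1 / (n : ℝ)))) N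
        ≤ cnt α (Set.Ico 0 lam) N + k := by
    intro r
    rcases Nat.eq_zero_or_pos r with rfl | hr1
    · refine ⟨0, fun _ N => ?_⟩
      rw [Nat.add_zero]
      apply cnt_mono
      apply Set.Ico_subset_Ico
      · norm_num
      · rw [hlam]
        have h9 : ((↑(0:ℕ) : ℝ) + 1) * (1 / (n : ℝ)) = 1 / (n : ℝ) := by norm_num
        rw [h9]
        linarith
    · by_cases hr : r < q
      · have hrR : (1 : ℝ) ≤ (r : ℝ) := by exact_mod_cast hr1
        have hrq : (r : ℝ) + 1 ≤ (q : ℝ) := by exact_mod_cast Nat.succ_le_of_lt hr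
        have hqnR : (q : ℝ) ≤ (n : ℝ) := by exact_mod_cast hqn
        obtain ⟨k, hk⟩ := trans_high hirr (u := (r : ℝ) * (1 / (n : ℝ)))
          (v := ((r : ℝ) + 1) * (1 / (n : ℝ))) (lam := lam)
          (by positivity) (by nlinarith)
          (by rw [mul_one_div, div_le_one hnR]; linarith)
          (by
            have h9 : ((r : ℝ) + 1) * (1 / (n : ℝ)) - (r : ℝ) * (1 / (n : ℝ))
                = 1 / (n : ℝ) := by ring
            rw [h9, hlam]
            linarith)
        exact ⟨k, fun _ => hk⟩
      · exact ⟨0, fun h => absurd h hr⟩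
  choose k hk using piece
  refine ⟨(c + η) * K₀ + (∑ r ∈ Finset.range q, k r : ℕ), fun N => ?_⟩
  have natstep : cnt α (Set.Ico 0 c) N
      ≤ q * cnt α (Set.Ico 0 lam) N + ∑ r ∈ Finset.range q, k r := by
    calc cnt α (Set.Ico 0 c) N
        ≤ cnt α (Set.Ico 0 ((q : ℝ) * (1 / (n : ℝ)))) N :=
          cnt_mono α (Set.Ico_subset_Ico le_rfl hcq) N
      _ = ∑ r ∈ Finset.range q,
            cnt α (Set.Ico ((r : ℝ) * (1 / (n : ℝ))) (((r : ℝ) + 1) * (1 / (n : ℝ)))) N :=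
          cnt_tele α (by positivity) q N
      _ ≤ ∑ r ∈ Finset.range q, (cnt α (Set.Ico 0 lam) N + k r) := by
          apply Finset.sum_le_sum
          intro r hr
          exact hk r (Finset.mem_range.1 hr) N
      _ = q * cnt α (Set.Ico 0 lam) N + ∑ r ∈ Finset.range q, k r := by
          rw [Finset.sum_add_distrib, Finset.sum_const, Finset.card_range, smul_eq_mul]
  have hX0 : (0 : ℝ) ≤ (cnt α (Set.Ico 0 lam) N : ℝ) := Nat.cast_nonneg _
  have hcnt : (cnt α (Set.Ico 0 lam) N : ℝ) * n' ≤ (N : ℝ) + K₀ := by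
    have := hK₀ N
    have h2 : ((n' * cnt α (Set.Ico 0 lam) N : ℕ) : ℝ) ≤ ((N + K₀ : ℕ) : ℝ) := by
      exact_mod_cast this
    push_cast at h2
    linarith
  have hq' : (q : ℝ) ≤ (c + η) * n' := by
    rw [hn'cast]
    have hηn : (1 + 2 * c + 2 * η) ≤ η * (n : ℝ) := by
      rw [div_add' _ _ _ (ne_of_gt hη)] at hn
      rw [div_le_iff₀ hη] at hn
      nlinarith
    nlinarith
  have hmul : (q : ℝ) * (cnt α (Set.Ico 0 lam) N : ℝ) ≤ (c + η) * ((N : ℝ) + K₀) := by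
    have e1 : (q : ℝ) * (cnt α (Set.Ico 0 lam) N : ℝ)
        ≤ ((c + η) * n') * (cnt α (Set.Ico 0 lam) N : ℝ) :=
      mul_le_mul_of_nonneg_right hq' hX0
    have e2 : (c + η) * ((cnt α (Set.Ico 0 lam) N : ℝ) * n') ≤ (c + η) * ((N : ℝ) + K₀) :=
      mul_le_mul_of_nonneg_left hcnt (by positivity)
    nlinarith [e1, e2]
  have natstepR : (cnt α (Set.Ico 0 c) N : ℝ)
      ≤ (q : ℝ) * (cnt α (Set.Ico 0 lam) N : ℝ) + ((∑ r ∈ Finset.range q, k r : ℕ) : ℝ) := by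
    exact_mod_cast natstep
  have hexp : (c + η) * ((N : ℝ) + K₀) = (c + η) * N + (c + η) * K₀ := by ring
  linarith [natstepR, hmul, hexp]

lemma lower_main {c η : ℝ} (hc0 : 0 < c) (hc1 : c ≤ 1) (hη : 0 < η) :
    ∃ K : ℝ, ∀ N : ℕ, (c - η) * N ≤ (cnt α (Set.Ico 0 c) N : ℝ) + K := by
  by_cases hcη : c ≤ η
  · refine ⟨0, fun N => ?_⟩
    have h1 : (c - η) * N ≤ 0 := mul_nonpos_of_nonpos_of_nonneg (by linarith) (Nat.cast_nonneg _)
    have h2 : (0 : ℝ) ≤ (cnt α (Set.Ico 0 c) N : ℝ) := Nat.cast_nonneg _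
    linarith
  · push_neg at hcη
    obtain ⟨k, hk⟩ := trans_high hirr (u := c) (v := 1) (lam := 1 - c + η / 2)
      hc0 hc1 le_rfl (by linarith)
    obtain ⟨K₀, hK₀⟩ := upper_main hirr (c := 1 - c + η / 2) (η := η / 4)
      (by linarith) (by linarith) (by linarith)
    refine ⟨K₀ + k, fun N => ?_⟩
    have hsplit : cnt α (Set.Ico 0 1) N = cnt α (Set.Ico 0 c) N + cnt α (Set.Ico c 1) N :=
      cnt_Ico_add α hc0.le hc1 N
    rw [cnt_total] at hsplit
    have h1 := hk N
    have h2 := hK₀ N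
    have h1R : (cnt α (Set.Ico c 1) N : ℝ)
        ≤ (cnt α (Set.Ico 0 (1 - c + η / 2)) N : ℝ) + k := by exact_mod_cast h1
    have hsplitR : (N : ℝ) = (cnt α (Set.Ico 0 c) N : ℝ) + (cnt α (Set.Ico c 1) N : ℝ) := by
      exact_mod_cast hsplit
    have hN0 : (0 : ℝ) ≤ (N : ℝ) := Nat.cast_nonneg _
    nlinarith [h1R, h2, hsplitR]

lemma tendsto_F {c : ℝ} (hc0 : 0 ≤ c) (hc1 : c ≤ 1) :
    Tendsto (fun N : ℕ => (cnt α (Set.Ico 0 c) N : ℝ) / N) atTop (nhds c) := by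
  rcases eq_or_lt_of_le hc0 with rfl | hcpos
  · have : (fun N : ℕ => (cnt α (Set.Ico 0 (0:ℝ)) N : ℝ) / N) = fun _ => 0 := by
      funext N
      rw [Set.Ico_self, cnt_empty]
      simp
    rw [this]
    exact tendsto_const_nhds
  · rw [Metric.tendsto_atTop]
    intro ε hε
    obtain ⟨K₁, h₁⟩ := upper_main hirr hc0 hc1 (by linarith : (0:ℝ) < ε/4)
    obtain ⟨K₂, h₂⟩ := lower_main hirr hcpos hc1 (by linarith : (0:ℝ) < ε/4)
    obtain ⟨N₀, hN₀⟩ := exists_nat_ge ((4 * (|K₁| + |K₂|) + 4) / ε)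
    refine ⟨N₀ + 1, fun N hN => ?_⟩
    have hNR : (N₀ : ℝ) ≤ (N : ℝ) := by exact_mod_cast Nat.le_of_succ_le hN
    have hN1 : (1 : ℝ) ≤ (N : ℝ) := by exact_mod_cast Nat.one_le_iff_ne_zero.2 (by omega)
    have hNpos : (0 : ℝ) < (N : ℝ) := by linarith
    have hNbig : (4 * (|K₁| + |K₂|) + 4) / ε ≤ (N : ℝ) := le_trans hN₀ hNR
    have hNε : 4 * (|K₁| + |K₂|) + 4 ≤ (N : ℝ) * ε := by
      rw [div_le_iff₀ hε] at hNbig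
      linarith
    have habs1 : K₁ ≤ |K₁| := le_abs_self _
    have habs2 : K₂ ≤ |K₂| := le_abs_self _
    have habs1' : (0:ℝ) ≤ |K₁| := abs_nonneg _
    have habs2' : (0:ℝ) ≤ |K₂| := abs_nonneg _
    rw [Real.dist_eq, abs_lt]
    have hup := h₁ N
    have hlo := h₂ N
    constructor
    · have key : (c - ε) * N < (cnt α (Set.Ico 0 c) N : ℝ) := by nlinarith
      have key2 : c - ε < (cnt α (Set.Ico 0 c) N : ℝ) / N := (lt_div_iff₀ hNpos).2 key
      linarith
    · have key : (cnt α (Set.Ico 0 c) N : ℝ) < (c + ε) * N := by nlinarith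
      have key2 : (cnt α (Set.Ico 0 c) N : ℝ) / N < c + ε := (div_lt_iff₀ hNpos).2 key
      linarith

end Main

lemma tendsto_cnt_Ico {α : ℝ} (hirr : Irrational α) {u v : ℝ} (h0 : 0 ≤ u) (huv : u ≤ v) (hv : v ≤ 1) :
    Tendsto (fun N : ℕ => (cnt α (Set.Ico u v) N : ℝ) / N) atTop (nhds (v - u)) := by
  have hsplit : ∀ N : ℕ, (cnt α (Set.Ico u v) N : ℝ) / N
      = (cnt α (Set.Ico 0 v) N : ℝ) / N - (cnt α (Set.Ico 0 u) N : ℝ) / N := by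
    intro N
    have h := cnt_Ico_add α (u := 0) (v := u) (w := v) h0 huv N
    have hR : (cnt α (Set.Ico 0 v) N : ℝ)
        = (cnt α (Set.Ico 0 u) N : ℝ) + (cnt α (Set.Ico u v) N : ℝ) := by exact_mod_cast h
    rw [hR]; ring
  simp only [hsplit]
  exact (tendsto_F hirr (le_trans h0 huv) hv).sub (tendsto_F hirr h0 (le_trans huv hv))


/-- **Three gap theorem, case 1**, frequencies: with `β ≥ max(α, 1-α)`,
the asymptotic frequency of indices `i` with `{iα} < β` whose gap is `1`
equals `2β - 1`, and the frequency of those whose gap is `2` equals `1 - β`. -/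
theorem three_gap_case_one_frequencies
    (α β : ℝ) (hα : α ∈ Set.Ioo (0 : ℝ) 1) (hirr : Irrational α)
    (hβ : β ∈ Set.Ioo (0 : ℝ) 1) (hβmax : max α (1 - α) ≤ β) :
    let gap : ℕ → ℕ := fun i => sInf {e : ℕ | 0 < e ∧ Int.fract (((i : ℝ) + (e : ℝ)) * α) < β}
    Tendsto (fun N : ℕ =>
        (((Finset.range N).filter
            (fun i : ℕ => Int.fract ((i : ℝ) * α) < β ∧ gap i = 1)).card : ℝ) / (N : ℝ))
      atTop (nhds (2 * β - 1)) ∧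
    Tendsto (fun N : ℕ =>
        (((Finset.range N).filter
            (fun i : ℕ => Int.fract ((i : ℝ) * α) < β ∧ gap i = 2)).card : ℝ) / (N : ℝ))
      atTop (nhds (1 - β)) := by
  intro gap
  obtain ⟨hα0, hα1⟩ := hα
  obtain ⟨hβ0, hβ1⟩ := hβ
  have hαβ : α ≤ β := le_trans (le_max_left _ _) hβmax
  have h1αβ : 1 - α ≤ β := le_trans (le_max_right _ _) hβmax
  have hfract1 : ∀ i : ℕ, Int.fract ((↑(i + 1) : ℝ) * α)
      = Int.fract (Int.fract ((i : ℝ) * α) + α) := by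
    intro i
    rw [fract_shift α i 1]
    congr 2
    rw [Nat.cast_one, one_mul, Int.fract_eq_self.2 ⟨hα0.le, hα1.le.lt_of_ne (by
      intro h; exact (Rat.not_irrational 1) (by rw [h] at hirr; simpa using hirr))⟩]
  have key1 : ∀ x : ℝ, 0 ≤ x → x < 1 - α → Int.fract (x + α) = x + α := by
    intro x hx0 hx1
    exact Int.fract_eq_self.2 ⟨by linarith, by linarith⟩
  have key2 : ∀ x : ℝ, 1 - α ≤ x → x < 1 → Int.fract (x + α) = x + α - 1 := by
    intro x h1 h2
    have h3 : Int.fract (x + α) = Int.fract (x + α - 1) := by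
      rw [show x + α - 1 = (x + α) + ((-1 : ℤ) : ℝ) by push_cast; ring, Int.fract_add_intCast]
    rw [h3]
    exact Int.fract_eq_self.2 ⟨by linarith, by linarith⟩
  have hgap1 : ∀ i : ℕ, Int.fract ((i : ℝ) * α) < β →
      (Int.fract ((i : ℝ) * α) < β - α ∨ 1 - α ≤ Int.fract ((i : ℝ) * α)) → gap i = 1 := by
    intro i hx hcase
    have h1S : Int.fract (((i : ℝ) + ((1 : ℕ) : ℝ)) * α) < β := by
      have he : ((i : ℝ) + ((1 : ℕ) : ℝ)) * α = (↑(i + 1) : ℝ) * α := by push_cast; ring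
      rw [he, hfract1 i]
      rcases hcase with h | h
      · rw [key1 _ (Int.fract_nonneg _) (by linarith)]
        linarith
      · rw [key2 _ h (Int.fract_lt_one _)]
        linarith
    show sInf {e : ℕ | 0 < e ∧ Int.fract (((i : ℝ) + (e : ℝ)) * α) < β} = 1
    have hmem1 : (1 : ℕ) ∈ {e : ℕ | 0 < e ∧ Int.fract (((i : ℝ) + (e : ℝ)) * α) < β} :=
      ⟨one_pos, h1S⟩
    apply le_antisymm (Nat.sInf_le hmem1)
    rcases Nat.eq_zero_or_pos (sInf {e : ℕ | 0 < e ∧ Int.fract (((i : ℝ) + (e : ℝ)) * α) < β})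
      with h0 | h0
    · rw [Nat.sInf_eq_zero] at h0
      rcases h0 with h0 | h0
      · exact absurd h0.1 (lt_irrefl 0)
      · exact absurd (Set.nonempty_of_mem hmem1) (by rw [h0]; exact Set.not_nonempty_empty)
    · exact h0
  have hgap2 : ∀ i : ℕ, β - α ≤ Int.fract ((i : ℝ) * α) → Int.fract ((i : ℝ) * α) < 1 - α →
      gap i = 2 := by
    intro i h1 h2
    have hx0 : 0 ≤ Int.fract ((i : ℝ) * α) := Int.fract_nonneg _
    have hnot1 : ¬ Int.fract (((i : ℝ) + ((1 : ℕ) : ℝ)) * α) < β := by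
      have he : ((i : ℝ) + ((1 : ℕ) : ℝ)) * α = (↑(i + 1) : ℝ) * α := by push_cast; ring
      rw [he, hfract1 i, key1 _ hx0 h2, not_lt]
      linarith
    have h2S : Int.fract (((i : ℝ) + ((2 : ℕ) : ℝ)) * α) < β := by
      have he : ((i : ℝ) + ((2 : ℕ) : ℝ)) * α = (↑((i + 1) + 1) : ℝ) * α := by push_cast; ring
      rw [he, hfract1 (i + 1), hfract1 i, key1 _ hx0 h2,
        key2 _ (by linarith) (by linarith)]
      linarith
    show sInf {e : ℕ | 0 < e ∧ Int.fract (((i : ℝ) + (e : ℝ)) * α) < β} = 2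
    have hmem2 : (2 : ℕ) ∈ {e : ℕ | 0 < e ∧ Int.fract (((i : ℝ) + (e : ℝ)) * α) < β} :=
      ⟨two_pos, h2S⟩
    apply le_antisymm (Nat.sInf_le hmem2)
    by_contra hlt
    push_neg at hlt
    have hmem := Nat.sInf_mem (Set.nonempty_of_mem hmem2)
    have h01 : 0 < sInf {e : ℕ | 0 < e ∧ Int.fract (((i : ℝ) + (e : ℝ)) * α) < β} := hmem.1
    have heq1 : sInf {e : ℕ | 0 < e ∧ Int.fract (((i : ℝ) + (e : ℝ)) * α) < β} = 1 := by omega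
    rw [heq1] at hmem
    exact hnot1 hmem.2
  have hPA : ∀ i : ℕ, ((Int.fract ((i : ℝ) * α) < β ∧ gap i = 1) ↔
      Int.fract ((i : ℝ) * α) ∈ (Set.Ico 0 (β - α) ∪ Set.Ico (1 - α) β)) := by
    intro i
    constructor
    · rintro ⟨hxβ, hg⟩
      rcases lt_or_ge (Int.fract ((i : ℝ) * α)) (β - α) with h | h
      · exact Or.inl ⟨Int.fract_nonneg _, h⟩
      · rcases lt_or_ge (Int.fract ((i : ℝ) * α)) (1 - α) with h' | h'
        · exfalso; have := hgap2 i h h'; omega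
        · exact Or.inr ⟨h', hxβ⟩
    · rintro (⟨h0, h1⟩ | ⟨h0, h1⟩)
      · have hxβ : Int.fract ((i : ℝ) * α) < β := by linarith
        exact ⟨hxβ, hgap1 i hxβ (Or.inl h1)⟩
      · exact ⟨h1, hgap1 i h1 (Or.inr h0)⟩
  have hPB : ∀ i : ℕ, ((Int.fract ((i : ℝ) * α) < β ∧ gap i = 2) ↔
      Int.fract ((i : ℝ) * α) ∈ Set.Ico (β - α) (1 - α)) := by
    intro i
    constructor
    · rintro ⟨hxβ, hg⟩
      rcases lt_or_ge (Int.fract ((i : ℝ) * α)) (β - α) with h | h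
      · exfalso; have := hgap1 i hxβ (Or.inl h); omega
      · rcases lt_or_ge (Int.fract ((i : ℝ) * α)) (1 - α) with h' | h'
        · exact ⟨h, h'⟩
        · exfalso; have := hgap1 i hxβ (Or.inr h'); omega
    · rintro ⟨h0, h1⟩
      have hxβ : Int.fract ((i : ℝ) * α) < β := by linarith
      exact ⟨hxβ, hgap2 i h0 h1⟩
  have hdisj : Disjoint (Set.Ico (0:ℝ) (β - α)) (Set.Ico (1 - α) β) := by
    rw [Set.Ico_disjoint_Ico]
    calc min (β - α) β ≤ β - α := min_le_left _ _
      _ ≤ 1 - α := by linarith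
      _ ≤ max 0 (1 - α) := le_max_right _ _
  have hcard1 : ∀ N : ℕ,
      ((((Finset.range N).filter
          (fun i : ℕ => Int.fract ((i : ℝ) * α) < β ∧ gap i = 1)).card)) =
        cnt α (Set.Ico 0 (β - α) ∪ Set.Ico (1 - α) β) N := by
    intro N
    unfold cnt
    rw [← Set.ncard_coe_finset]
    congr 1
    ext i
    simp only [Finset.coe_filter, Finset.mem_range, Set.mem_setOf_eq]
    exact and_congr_right (fun _ => hPA i)
  have hcard2 : ∀ N : ℕ,
      ((((Finset.range N).filter
          (fun i : ℕ => Int.fract ((i : ℝ) * α) < β ∧ gap i = 2)).card)) =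
        cnt α (Set.Ico (β - α) (1 - α)) N := by
    intro N
    unfold cnt
    rw [← Set.ncard_coe_finset]
    congr 1
    ext i
    simp only [Finset.coe_filter, Finset.mem_range, Set.mem_setOf_eq]
    exact and_congr_right (fun _ => hPB i)
  constructor
  · have t1 := tendsto_cnt_Ico hirr (u := (0:ℝ)) (v := β - α) le_rfl (by linarith) (by linarith)
    have t2 := tendsto_cnt_Ico hirr (u := 1 - α) (v := β) (by linarith) h1αβ hβ1.le
    have hlim := t1.add t2
    have hval : (β - α - 0) + (β - (1 - α)) = 2 * β - 1 := by ring
    rw [hval] at hlim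
    refine Tendsto.congr (f₁ := fun N : ℕ =>
        (cnt α (Set.Ico 0 (β - α)) N : ℝ) / N + (cnt α (Set.Ico (1 - α) β) N : ℝ) / N)
      (fun N => ?_) hlim
    rw [hcard1 N, cnt_union α hdisj N]
    push_cast
    ring
  · have t3 := tendsto_cnt_Ico hirr (u := β - α) (v := 1 - α) (by linarith) (by linarith)
      (by linarith)
    have hval : (1 - α) - (β - α) = 1 - β := by ring
    rw [hval] at t3
    refine Tendsto.congr (fun N => ?_) t3
    rw [hcard2 N]
end

section
/- In the three-gap setting with β < max(α, 1 − α), for every natural number i with {iα} < β, the gap after i belongs to the set {b, d, b + d}. -/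
private lemma fract_sub' (a c : ℝ) : Int.fract (a - c) = Int.fract (Int.fract a - Int.fract c) := by
  rw [Int.fract_eq_fract]
  exact ⟨⌊a⌋ - ⌊c⌋, by unfold Int.fract; push_cast; ring⟩

private lemma fract_add' (a c : ℝ) : Int.fract (a + c) = Int.fract (Int.fract a + Int.fract c) := by
  rw [Int.fract_eq_fract]
  exact ⟨⌊a⌋ + ⌊c⌋, by unfold Int.fract; push_cast; ring⟩

private lemma fract_ne' {α : ℝ} (h : Irrational α) {m n : ℕ} (hmn : m ≠ n) :
    Int.fract ((m:ℝ)*α) ≠ Int.fract ((n:ℝ)*α) := by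
  intro heq
  obtain ⟨z, hz⟩ := Int.fract_eq_fract.mp heq
  have hmn' : (m:ℝ) - (n:ℝ) ≠ 0 := by
    intro h0
    exact hmn (by exact_mod_cast sub_eq_zero.mp h0)
  apply h
  refine ⟨(z : ℚ) / ((m:ℚ) - (n:ℚ)), ?_⟩
  push_cast
  rw [div_eq_iff hmn']
  linarith [hz, mul_comm α ((m:ℝ) - (n:ℝ))]

private lemma exists_seed {α β : ℝ} (hβ0 : 0 < β) :
    ∃ n : ℕ, 0 < n ∧ (Int.fract ((n:ℝ)*α) < β ∨ 1 - β < Int.fract ((n:ℝ)*α)) := by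
  obtain ⟨N, hN⟩ := exists_nat_gt (1/β)
  have hN0 : 0 < N := by
    by_contra hc
    push_neg at hc
    interval_cases N
    simp at hN
    linarith [one_div_pos.mpr hβ0, hN]
  obtain ⟨k, hk0, _, hk⟩ := Real.exists_nat_abs_mul_sub_round_le α hN0
  have hsmall : 1/((N:ℝ)+1) < β := by
    rw [div_lt_iff₀ (by positivity)]
    rw [div_lt_iff₀ hβ0] at hN
    nlinarith
  have hhalf : 1/((N:ℝ)+1) ≤ 1/2 := by
    apply one_div_le_one_div_of_le (by norm_num)
    have : (1:ℝ) ≤ N := by exact_mod_cast hN0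
    linarith
  set c : ℝ := (k:ℝ)*α - round ((k:ℝ)*α) with hc
  have hfr : Int.fract ((k:ℝ)*α) = Int.fract c := by
    rw [hc, Int.fract_sub_intCast]
  obtain ⟨hc1, hc2⟩ := abs_le.mp hk
  rcases le_or_gt 0 c with h0 | h0
  · refine ⟨k, hk0, Or.inl ?_⟩
    rw [hfr, Int.fract_eq_self.mpr ⟨h0, by linarith⟩]
    linarith
  · refine ⟨k, hk0, Or.inr ?_⟩
    have hfc : Int.fract c = c + 1 := by
      rw [Int.fract_eq_iff]
      exact ⟨by linarith, by linarith, ⟨-1, by push_cast; ring⟩⟩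
    rw [hfr, hfc]
    linarith

private lemma fract_nsmul (k n : ℕ) (α : ℝ) :
    Int.fract (((k*n : ℕ):ℝ)*α) = Int.fract ((k:ℝ) * Int.fract ((n:ℝ)*α)) := by
  rw [Int.fract_eq_fract]
  exact ⟨k*⌊(n:ℝ)*α⌋, by unfold Int.fract; push_cast; ring⟩

private lemma exists_D {α β : ℝ} (hβ1 : β < 1) {n : ℕ} (hn : 0 < n)
    (hw0 : 0 < Int.fract ((n:ℝ)*α)) (hwβ : Int.fract ((n:ℝ)*α) < β) :
    ∃ m : ℕ, 0 < m ∧ 1 - β < Int.fract ((m:ℝ)*α) := by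
  set w := Int.fract ((n:ℝ)*α) with hw
  set K : ℕ := ⌊(1-β)/w⌋₊ + 1 with hK
  have h1 : 1 - β < (K:ℝ)*w := by
    have := Nat.lt_floor_add_one ((1-β)/w)
    rw [div_lt_iff₀ hw0] at this
    push_cast [hK]
    linarith
  have h2 : (K:ℝ)*w < 1 := by
    have hfl : (⌊(1-β)/w⌋₊ : ℝ) ≤ (1-β)/w :=
      Nat.floor_le (div_nonneg (by linarith) hw0.le)
    rw [le_div_iff₀ hw0] at hfl
    push_cast [hK]
    nlinarith
  refine ⟨K*n, Nat.mul_pos (Nat.succ_pos _) hn, ?_⟩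
  rw [fract_nsmul, Int.fract_eq_self.mpr ⟨by positivity, h2⟩]
  exact h1

private lemma exists_B {α β : ℝ} (hβ1 : β < 1) {n : ℕ} (hn : 0 < n)
    (hwβ : 1 - β < Int.fract ((n:ℝ)*α)) :
    ∃ m : ℕ, 0 < m ∧ Int.fract ((m:ℝ)*α) < β := by
  set u := 1 - Int.fract ((n:ℝ)*α) with hu
  have hu0 : 0 < u := by have := Int.fract_lt_one ((n:ℝ)*α); simp [hu]; linarith
  have huβ : u < β := by simp [hu]; linarith
  set K : ℕ := ⌊(1-β)/u⌋₊ + 1 with hK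
  have h1 : 1 - β < (K:ℝ)*u := by
    have := Nat.lt_floor_add_one ((1-β)/u)
    rw [div_lt_iff₀ hu0] at this
    push_cast [hK]
    linarith
  have h2 : (K:ℝ)*u < 1 := by
    have hfl : (⌊(1-β)/u⌋₊ : ℝ) ≤ (1-β)/u :=
      Nat.floor_le (div_nonneg (by linarith) hu0.le)
    rw [le_div_iff₀ hu0] at hfl
    push_cast [hK]
    nlinarith
  refine ⟨K*n, Nat.mul_pos (Nat.succ_pos _) hn, ?_⟩
  rw [fract_nsmul]
  have heq : (K:ℝ) * Int.fract ((n:ℝ)*α) = ((K:ℝ) - (K:ℝ)*u) := by rw [hu]; ring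
  rw [heq]
  have hfr : Int.fract ((K:ℝ) - (K:ℝ)*u) = 1 - (K:ℝ)*u := by
    rw [Int.fract_eq_iff]
    refine ⟨by linarith, by nlinarith, ⟨(K:ℤ) - 1, by push_cast; ring⟩⟩
  rw [hfr]
  linarith

/-- **Three gap theorem, case 2** (qualitative). If `α ∈ (0,1)` is irrational,
`β ∈ (0,1)` with `β < max(α, 1-α)`, `b` is the least positive integer with
`{bα} < β` and `d` the least positive integer with `{dα} > 1-β`, then every gap
belongs to `{b, d, b+d}`. -/
theorem three_gap_case_two
    (α β : ℝ) (hα : α ∈ Set.Ioo (0 : ℝ) 1) (hirr : Irrational α)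
    (hβ : β ∈ Set.Ioo (0 : ℝ) 1) (hβmax : β < max α (1 - α)) :
    let gap : ℕ → ℕ := fun i => sInf {e : ℕ | 0 < e ∧ Int.fract (((i : ℝ) + (e : ℝ)) * α) < β}
    let b : ℕ := sInf {m : ℕ | 0 < m ∧ Int.fract ((m : ℝ) * α) < β}
    let d : ℕ := sInf {m : ℕ | 0 < m ∧ 1 - β < Int.fract ((m : ℝ) * α)}
    ∀ i : ℕ, Int.fract ((i : ℝ) * α) < β →
      gap i = b ∨ gap i = d ∨ gap i = b + d := by
  intro gap b d i hi
  obtain ⟨hα0, hα1⟩ := hα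
  obtain ⟨hβ0, hβ1⟩ := hβ
  have hne : ∀ m n : ℕ, m ≠ n → Int.fract ((m:ℝ)*α) ≠ Int.fract ((n:ℝ)*α) :=
    fun _ _ h => fract_ne' hirr h
  have hpos : ∀ n : ℕ, 0 < n → 0 < Int.fract ((n:ℝ)*α) := by
    intro n hn
    have h0 : Int.fract (((0:ℕ):ℝ)*α) = 0 := by norm_num
    have h1 := hne n 0 hn.ne'
    rw [h0] at h1
    exact lt_of_le_of_ne (Int.fract_nonneg _) (Ne.symm h1)
  -- B and D nonempty
  have hBne : {m : ℕ | 0 < m ∧ Int.fract ((m:ℝ)*α) < β}.Nonempty := by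
    obtain ⟨n, hn, hc⟩ := exists_seed (α := α) hβ0
    rcases hc with h | h
    · exact ⟨n, hn, h⟩
    · exact exists_B hβ1 hn h
  have hDne : {m : ℕ | 0 < m ∧ 1 - β < Int.fract ((m:ℝ)*α)}.Nonempty := by
    obtain ⟨n, hn, hc⟩ := exists_seed (α := α) hβ0
    rcases hc with h | h
    · exact exists_D hβ1 hn (hpos n hn) h
    · exact ⟨n, hn, h⟩
  have hbmem : 0 < b ∧ Int.fract ((b:ℝ)*α) < β := Nat.sInf_mem hBne
  have hdmem : 0 < d ∧ 1 - β < Int.fract ((d:ℝ)*α) := Nat.sInf_mem hDne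
  have hbmin : ∀ m : ℕ, 0 < m → Int.fract ((m:ℝ)*α) < β → b ≤ m :=
    fun m h1 h2 => Nat.sInf_le ⟨h1, h2⟩
  have hdmin : ∀ m : ℕ, 0 < m → 1 - β < Int.fract ((m:ℝ)*α) → d ≤ m :=
    fun m h1 h2 => Nat.sInf_le ⟨h1, h2⟩
  obtain ⟨hb0, hsβ⟩ := hbmem
  obtain ⟨hd0, hdβ⟩ := hdmem
  set x := Int.fract ((i:ℝ)*α) with hxdef
  set s := Int.fract ((b:ℝ)*α) with hsdef
  set t := 1 - Int.fract ((d:ℝ)*α) with htdef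
  have hs0 : 0 < s := hpos b hb0
  have hs1 : s < 1 := Int.fract_lt_one _
  have ht0 : 0 < t := by have := Int.fract_lt_one ((d:ℝ)*α); rw [htdef]; linarith
  have htβ : t < β := by rw [htdef]; linarith
  have hx0 : 0 ≤ x := Int.fract_nonneg _
  -- step formulas
  have hstep : ∀ e : ℕ, Int.fract (((i+e : ℕ):ℝ)*α)
      = Int.fract (x + Int.fract ((e:ℝ)*α)) := by
    intro e
    rw [hxdef, ← fract_add']
    push_cast
    ring_nf
  have hback : ∀ e : ℕ, Int.fract ((e:ℝ)*α)
      = Int.fract (Int.fract (((i+e : ℕ):ℝ)*α) - x) := by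
    intro e
    rw [hxdef, ← fract_sub']
    congr 1
    push_cast
    ring
  have hcast : ∀ e : ℕ, Int.fract (((i:ℝ)+(e:ℝ))*α) = Int.fract (((i+e : ℕ):ℝ)*α) := by
    intro e; congr 1; push_cast; ring
  -- key fact A
  have factA : ∀ m : ℕ, 0 < m → Int.fract ((m:ℝ)*α) < s → b + d ≤ m := by
    intro m hm0 hvs
    have hvβ : Int.fract ((m:ℝ)*α) < β := lt_trans hvs hsβ
    have hbm : b ≤ m := hbmin m hm0 hvβ
    have hbm' : b < m := lt_of_le_of_ne hbm (by rintro rfl; exact absurd hvs (lt_irrefl _))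
    have hcast2 : ((m - b : ℕ):ℝ) = (m:ℝ) - (b:ℝ) := by
      push_cast [Nat.cast_sub hbm]; ring
    have hsub : Int.fract (((m-b : ℕ):ℝ)*α)
        = Int.fract (Int.fract ((m:ℝ)*α) - s) := by
      rw [hsdef, ← fract_sub', hcast2, sub_mul]
    have hv0 : 0 ≤ Int.fract ((m:ℝ)*α) := Int.fract_nonneg _
    have hval : Int.fract (Int.fract ((m:ℝ)*α) - s)
        = Int.fract ((m:ℝ)*α) - s + 1 := by
      rw [Int.fract_eq_iff]
      exact ⟨by linarith, by linarith, ⟨-1, by push_cast; ring⟩⟩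
    have hdm : d ≤ m - b := by
      apply hdmin _ (by omega)
      rw [hsub, hval]
      have : s < β := hsβ
      linarith
    omega
  -- key fact B
  have factB : ∀ m : ℕ, 0 < m → 1 - t < Int.fract ((m:ℝ)*α) → b + d ≤ m := by
    intro m hm0 hvt
    have hv1 : Int.fract ((m:ℝ)*α) < 1 := Int.fract_lt_one _
    have hdm : d ≤ m := hdmin m hm0 (by linarith)
    have hdm' : d < m := by
      rcases lt_or_eq_of_le hdm with h | h
      · exact h
      · exfalso; rw [← h] at hvt; rw [htdef] at hvt; linarith
    have hcast2 : ((m - d : ℕ):ℝ) = (m:ℝ) - (d:ℝ) := by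
      push_cast [Nat.cast_sub hdm]; ring
    have hsub : Int.fract (((m-d : ℕ):ℝ)*α)
        = Int.fract (Int.fract ((m:ℝ)*α) - (1 - t)) := by
      rw [htdef]
      simp only [sub_sub_cancel]
      rw [← fract_sub', hcast2, sub_mul]
    have hval : Int.fract (Int.fract ((m:ℝ)*α) - (1 - t))
        = Int.fract ((m:ℝ)*α) - (1 - t) := by
      rw [Int.fract_eq_self]
      constructor
      · linarith
      · linarith
    have hbm : b ≤ m - d := by
      apply hbmin _ (by omega)
      rw [hsub, hval]
      linarith
    omega
  -- candidate computations
  have hbstep : Int.fract (((i+b : ℕ):ℝ)*α) = Int.fract (x + s) := by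
    rw [hstep b, ← hsdef]
  have hdstep : Int.fract (((i+d : ℕ):ℝ)*α) = Int.fract (x + (1 - t)) := by
    rw [hstep d, htdef]; ring_nf
  have hbdstep : Int.fract (((i+(b+d) : ℕ):ℝ)*α) = Int.fract (x + s - t + 1) := by
    rw [Int.fract_eq_fract]
    refine ⟨⌊(i:ℝ)*α⌋ + ⌊(b:ℝ)*α⌋ + ⌊(d:ℝ)*α⌋, ?_⟩
    rw [hxdef, hsdef, htdef]
    unfold Int.fract
    push_cast
    ring
  -- region facts: which candidates work
  have wb1 : x + s < β → Int.fract (x + s) < β := by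
    intro h
    rw [Int.fract_eq_self.mpr ⟨by linarith, by linarith⟩]
    exact h
  have wb2 : 1 ≤ x + s → Int.fract (x + s) < β := by
    intro h
    have : Int.fract (x + s) = x + s - 1 := by
      rw [Int.fract_eq_iff]
      refine ⟨by linarith, by linarith [hi, hs1], ⟨1, by push_cast; ring⟩⟩
    rw [this]
    have hxβ : x < β := hi
    linarith
  have wd : t ≤ x → Int.fract (x + (1 - t)) < β := by
    intro h
    have : Int.fract (x + (1 - t)) = x - t := by
      rw [Int.fract_eq_iff]
      have hxβ : x < β := hi
      refine ⟨by linarith, by linarith, ⟨1, by push_cast; ring⟩⟩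
    rw [this]
    have hxβ : x < β := hi
    linarith
  have wbd : x < t → β ≤ x + s → x + s < 1 → Int.fract (x + s - t + 1) < β := by
    intro h1 h2 h3
    have : Int.fract (x + s - t + 1) = x + s - t := by
      rw [Int.fract_eq_iff]
      refine ⟨by linarith, by linarith, ⟨1, by push_cast; ring⟩⟩
    rw [this]
    linarith
  -- the gap set is nonempty
  have hGw : ∃ w : ℕ, (w = b ∨ w = d ∨ w = b + d) ∧
      (0 < w ∧ Int.fract (((i:ℝ)+(w:ℝ))*α) < β) := by
    rcases lt_or_ge (x+s) β with h | h
    · exact ⟨b, Or.inl rfl, hb0, by rw [hcast, hbstep]; exact wb1 h⟩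
    rcases le_or_gt 1 (x+s) with h' | h'
    · exact ⟨b, Or.inl rfl, hb0, by rw [hcast, hbstep]; exact wb2 h'⟩
    rcases le_or_gt t x with h'' | h''
    · exact ⟨d, Or.inr (Or.inl rfl), hd0, by rw [hcast, hdstep]; exact wd h''⟩
    · exact ⟨b+d, Or.inr (Or.inr rfl), by omega,
        by rw [hcast, hbdstep]; exact wbd h'' h h'⟩
  obtain ⟨w, hwval, hwmem⟩ := hGw
  have hGne : {e : ℕ | 0 < e ∧ Int.fract (((i:ℝ)+(e:ℝ))*α) < β}.Nonempty := ⟨w, hwmem⟩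
  set E := gap i with hEdef
  have hgmem : 0 < E ∧ Int.fract (((i:ℝ)+(E:ℝ))*α) < β := Nat.sInf_mem hGne
  obtain ⟨he0, heβ'⟩ := hgmem
  have heβ : Int.fract (((i+E : ℕ):ℝ)*α) < β := by rw [← hcast]; exact heβ'
  set y := Int.fract (((i+E : ℕ):ℝ)*α) with hydef
  have hy0 : 0 ≤ y := Int.fract_nonneg _
  have hy1 : y < 1 := Int.fract_lt_one _
  have hxy : x ≠ y := by
    rw [hxdef, hydef]
    exact hne i (i+E) (by omega)
  have hEfr : Int.fract ((E:ℝ)*α) = Int.fract (y - x) := by rw [hback E, hydef]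
  have hgmin : ∀ e : ℕ, 0 < e → Int.fract (((i:ℝ)+(e:ℝ))*α) < β → E ≤ e :=
    fun e h1 h2 => Nat.sInf_le ⟨h1, h2⟩
  have hxβ : x < β := hi
  rcases lt_or_gt_of_ne hxy with hlt | hgt
  · -- x < y : step to the right
    have hfrE : Int.fract ((E:ℝ)*α) = y - x := by
      rw [hEfr, Int.fract_eq_self.mpr ⟨by linarith, by linarith⟩]
    have hbE : b ≤ E := hbmin E he0 (by rw [hfrE]; linarith)
    rcases eq_or_lt_of_le hbE with heq | hblt
    · exact Or.inl heq.symm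
    · have hbfail : ¬ (Int.fract (x+s) < β) := by
        intro hc
        have := hgmin b hb0 (by rw [hcast, hbstep]; exact hc)
        omega
      have hxs1 : x + s < 1 := by
        by_contra hc
        push_neg at hc
        exact hbfail (wb2 hc)
      have hxsβ : β ≤ x + s := by
        by_contra hc
        push_neg at hc
        exact hbfail (wb1 hc)
      have hEA : b + d ≤ E := factA E he0 (by rw [hfrE]; linarith)
      have hxt : x < t := by
        by_contra hc
        push_neg at hc
        have := hgmin d hd0 (by rw [hcast, hdstep]; exact wd hc)
        omega
      have hle : E ≤ b + d :=
        hgmin (b+d) (by omega) (by rw [hcast, hbdstep]; exact wbd hxt hxsβ hxs1)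
      exact Or.inr (Or.inr (by omega))
  · -- y < x : step to the left
    have hfrE : Int.fract ((E:ℝ)*α) = y - x + 1 := by
      rw [hEfr, Int.fract_eq_iff]
      exact ⟨by linarith, by linarith, ⟨-1, by push_cast; ring⟩⟩
    have hdE : d ≤ E := hdmin E he0 (by rw [hfrE]; linarith)
    rcases eq_or_lt_of_le hdE with heq | hdlt
    · exact Or.inr (Or.inl heq.symm)
    · have hdfail : ¬ (Int.fract (x + (1-t)) < β) := by
        intro hc
        have := hgmin d hd0 (by rw [hcast, hdstep]; exact hc)
        omega
      have hxt : x < t := by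
        by_contra hc
        push_neg at hc
        exact hdfail (wd hc)
      have hEB : b + d ≤ E := factB E he0 (by rw [hfrE]; linarith)
      have hbfail : ¬ (Int.fract (x+s) < β) := by
        intro hc
        have := hgmin b hb0 (by rw [hcast, hbstep]; exact hc)
        omega
      have hxs1 : x + s < 1 := by
        by_contra hc
        push_neg at hc
        exact hbfail (wb2 hc)
      have hxsβ : β ≤ x + s := by
        by_contra hc
        push_neg at hc
        exact hbfail (wb1 hc)
      have hle : E ≤ b + d :=
        hgmin (b+d) (by omega) (by rw [hcast, hbdstep]; exact wbd hxt hxsβ hxs1)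
      exact Or.inr (Or.inr (by omega))
end

section
/- In the three-gap setting with β < max(α, 1 − α), one has b ≠ d, the fractional part of (b − d)α (as a real number, b − d possibly negative) equals s + t, and β ≤ s + t. -/
open Int

private lemma fract_ne_zero_aux {α : ℝ} (hirr : Irrational α) {m : ℕ} (hm : 0 < m) :
    Int.fract ((m : ℝ) * α) ≠ 0 := by
  intro h
  have hmul : Irrational ((m : ℝ) * α) := hirr.natCast_mul hm.ne'
  have : ((m : ℝ) * α) = (⌊(m : ℝ) * α⌋ : ℝ) := by
    have := sub_eq_zero.mp h
    linarith [this]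
  exact hmul.ne_int _ this

/-- seed: there is a positive multiple whose fractional part is within β of 0 or 1. -/
private lemma seed_aux (α : ℝ) {β : ℝ} (hβ : 0 < β) :
    ∃ m : ℕ, 0 < m ∧ (Int.fract ((m : ℝ) * α) < β ∨ 1 - β < Int.fract ((m : ℝ) * α)) := by
  obtain ⟨n, hn⟩ := exists_nat_one_div_lt hβ
  have hn1 : (1 : ℝ) / ((n + 1 : ℕ) + 1) < β := by
    refine lt_of_le_of_lt ?_ hn
    apply div_le_div_of_nonneg_left (by norm_num) (by positivity)
    push_cast; linarith
  obtain ⟨j, k, hk0, hkn, habs⟩ := Real.exists_int_int_abs_mul_sub_le α (n := n + 1) n.succ_pos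
  refine ⟨k.toNat, by omega, ?_⟩
  have hkr : ((k.toNat : ℕ) : ℝ) = (k : ℝ) := by
    exact_mod_cast congrArg (Int.cast : ℤ → ℝ) (Int.toNat_of_nonneg hk0.le)
  have habs' : |(k : ℝ) * α - j| < β := lt_of_le_of_lt (by push_cast at habs ⊢; linarith) hn1
  rw [hkr]
  by_cases hj : (j : ℝ) ≤ ⌊(k : ℝ) * α⌋
  · left
    have h1 : (k : ℝ) * α - j ≥ Int.fract ((k : ℝ) * α) := by
      rw [Int.fract]; linarith
    calc Int.fract ((k : ℝ) * α) ≤ (k : ℝ) * α - j := h1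
      _ ≤ |(k : ℝ) * α - j| := le_abs_self _
      _ < β := habs'
  · right
    push_neg at hj
    have hj' : (⌊(k : ℝ) * α⌋ : ℝ) + 1 ≤ j := by
      have : ⌊(k : ℝ) * α⌋ + 1 ≤ j := by exact_mod_cast hj
      exact_mod_cast this
    have h1 : (j : ℝ) - (k : ℝ) * α ≥ 1 - Int.fract ((k : ℝ) * α) := by
      rw [Int.fract]; linarith
    have h2 : (j : ℝ) - (k : ℝ) * α ≤ |(k : ℝ) * α - j| := by
      rw [abs_sub_comm]; exact le_abs_self _
    linarith

private lemma exists_k_aux {x β : ℝ} (hx0 : 0 < x) (hxβ : x < β) (hβ1 : β < 1) :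
    ∃ k : ℕ, 0 < k ∧ 1 - β < (k : ℝ) * x ∧ (k : ℝ) * x < 1 := by
  refine ⟨⌊(1 - β) / x⌋₊ + 1, Nat.succ_pos _, ?_, ?_⟩
  · have h1 : (1 - β) / x < ((⌊(1 - β) / x⌋₊ + 1 : ℕ) : ℝ) := by
      push_cast
      exact Nat.lt_floor_add_one _
    calc 1 - β = (1 - β) / x * x := by field_simp
      _ < ((⌊(1 - β) / x⌋₊ + 1 : ℕ) : ℝ) * x := mul_lt_mul_of_pos_right h1 hx0
  · have h1 : (⌊(1 - β) / x⌋₊ : ℝ) * x ≤ (1 - β) / x * x :=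
      mul_le_mul_of_nonneg_right (Nat.floor_le (div_nonneg (by linarith) hx0.le)) hx0.le
    have h2 : (1 - β) / x * x = 1 - β := by field_simp
    push_cast
    nlinarith

private lemma fract_nat_mul_aux (α : ℝ) (m k : ℕ) :
    Int.fract (((k * m : ℕ) : ℝ) * α) = Int.fract ((k : ℝ) * Int.fract ((m : ℝ) * α)) := by
  rw [Int.fract_eq_fract]
  refine ⟨(k : ℤ) * ⌊(m : ℝ) * α⌋, ?_⟩
  have h : Int.fract ((m : ℝ) * α) = (m : ℝ) * α - ⌊(m : ℝ) * α⌋ := rfl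
  push_cast
  linear_combination (-(k : ℝ)) * h

/-- From a multiple near 1, produce a multiple near 0. -/
private lemma near_zero_of_near_one {α β : ℝ} (hirr : Irrational α) (hβ1 : β < 1)
    {m : ℕ} (hm : 0 < m) (hmem : 1 - β < Int.fract ((m : ℝ) * α)) :
    ∃ m' : ℕ, 0 < m' ∧ Int.fract ((m' : ℝ) * α) < β := by
  have hδ0 : 0 < 1 - Int.fract ((m : ℝ) * α) := by
    have := Int.fract_lt_one ((m : ℝ) * α); linarith
  have hδβ : 1 - Int.fract ((m : ℝ) * α) < β := by linarith
  obtain ⟨k, hk0, hklb, hkub⟩ := exists_k_aux hδ0 hδβ hβ1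
  refine ⟨k * m, Nat.mul_pos hk0 hm, ?_⟩
  rw [fract_nat_mul_aux]
  have key : Int.fract ((k : ℝ) * Int.fract ((m : ℝ) * α)) =
      Int.fract (-((k : ℝ) * (1 - Int.fract ((m : ℝ) * α)))) := by
    rw [Int.fract_eq_fract]
    exact ⟨(k : ℤ), by push_cast; ring⟩
  have hfk : Int.fract ((k : ℝ) * (1 - Int.fract ((m : ℝ) * α))) =
      (k : ℝ) * (1 - Int.fract ((m : ℝ) * α)) :=
    Int.fract_eq_self.mpr ⟨by positivity, hkub⟩
  have hne : Int.fract ((k : ℝ) * (1 - Int.fract ((m : ℝ) * α))) ≠ 0 := by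
    rw [hfk]; positivity
  rw [key, Int.fract_neg hne, hfk]
  linarith

/-- From a multiple near 0, produce a multiple near 1. -/
private lemma near_one_of_near_zero {α β : ℝ} (hirr : Irrational α) (hβ1 : β < 1)
    {m : ℕ} (hm : 0 < m) (hmem : Int.fract ((m : ℝ) * α) < β) :
    ∃ m' : ℕ, 0 < m' ∧ 1 - β < Int.fract ((m' : ℝ) * α) := by
  have hs0 : 0 < Int.fract ((m : ℝ) * α) :=
    lt_of_le_of_ne (Int.fract_nonneg _) (Ne.symm (fract_ne_zero_aux hirr hm))
  obtain ⟨k, hk0, hklb, hkub⟩ := exists_k_aux hs0 hmem hβ1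
  refine ⟨k * m, Nat.mul_pos hk0 hm, ?_⟩
  rw [fract_nat_mul_aux]
  have hfk : Int.fract ((k : ℝ) * Int.fract ((m : ℝ) * α)) =
      (k : ℝ) * Int.fract ((m : ℝ) * α) :=
    Int.fract_eq_self.mpr ⟨by positivity, hkub⟩
  rw [hfk]
  exact hklb

/-- In the three-gap setting with `β < max(α, 1-α)`: `b ≠ d`, the fractional
part of `(b - d)α` equals `s + t`, and `β ≤ s + t`. -/
theorem three_gap_b_ne_d_and_beta_le_s_add_t
    (α β : ℝ) (hα : α ∈ Set.Ioo (0 : ℝ) 1) (hirr : Irrational α)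
    (hβ : β ∈ Set.Ioo (0 : ℝ) 1) (hβmax : β < max α (1 - α)) :
    let b : ℕ := sInf {m : ℕ | 0 < m ∧ Int.fract ((m : ℝ) * α) < β}
    let d : ℕ := sInf {m : ℕ | 0 < m ∧ 1 - β < Int.fract ((m : ℝ) * α)}
    let s : ℝ := Int.fract ((b : ℝ) * α)
    let t : ℝ := 1 - Int.fract ((d : ℝ) * α)
    b ≠ d ∧ Int.fract (((b : ℝ) - (d : ℝ)) * α) = s + t ∧ β ≤ s + t := by
  obtain ⟨hα0, hα1⟩ := hα
  obtain ⟨hβ0, hβ1⟩ := hβ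
  intro b d s t
  -- nonemptiness of the two sets
  have hBne : {m : ℕ | 0 < m ∧ Int.fract ((m : ℝ) * α) < β}.Nonempty := by
    obtain ⟨m, hm, h⟩ := seed_aux α hβ0
    rcases h with h | h
    · exact ⟨m, hm, h⟩
    · obtain ⟨m', hm', h'⟩ := near_zero_of_near_one hirr hβ1 hm h
      exact ⟨m', hm', h'⟩
  have hDne : {m : ℕ | 0 < m ∧ 1 - β < Int.fract ((m : ℝ) * α)}.Nonempty := by
    obtain ⟨m, hm, h⟩ := seed_aux α hβ0
    rcases h with h | h
    · obtain ⟨m', hm', h'⟩ := near_one_of_near_zero hirr hβ1 hm h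
      exact ⟨m', hm', h'⟩
    · exact ⟨m, hm, h⟩
  have hb0 : 0 < b := (Nat.sInf_mem hBne).1
  have hbβ : Int.fract ((b : ℝ) * α) < β := (Nat.sInf_mem hBne).2
  have hd0 : 0 < d := (Nat.sInf_mem hDne).1
  have hdβ : 1 - β < Int.fract ((d : ℝ) * α) := (Nat.sInf_mem hDne).2
  have hfα : Int.fract (((1 : ℕ) : ℝ) * α) = α := by
    rw [Nat.cast_one, one_mul, Int.fract_eq_self]; exact ⟨hα0.le, hα1⟩
  -- basic bounds
  have hs0 : 0 < s := lt_of_le_of_ne (Int.fract_nonneg _) (Ne.symm (fract_ne_zero_aux hirr hb0))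
  have ht0 : 0 < t := by
    have := Int.fract_lt_one ((d : ℝ) * α); simp only [t]; linarith
  have hsβ : s < β := hbβ
  have htβ : t < β := by simp only [t]; linarith
  -- key: s + t < 1
  have hst1 : s + t < 1 := by
    rcases le_or_gt β (1 - β) with h | h
    · linarith
    · rcases lt_max_iff.mp hβmax with hc | hc
      · -- β < α : then d = 1 and t = 1 - α
        have h1D : 1 ∈ {m : ℕ | 0 < m ∧ 1 - β < Int.fract ((m : ℝ) * α)} := by
          refine ⟨Nat.one_pos, ?_⟩
          rw [hfα]; linarith
        have hd1 : d = 1 := le_antisymm (Nat.sInf_le h1D) hd0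
        have ht : t = 1 - α := by
          show (1 : ℝ) - Int.fract ((d : ℝ) * α) = 1 - α
          rw [hd1]; rw [show ((1 : ℕ) : ℝ) * α = ((1 : ℕ) : ℝ) * α from rfl, hfα]
        rw [ht]; linarith
      · -- β < 1 - α : then b = 1 and s = α
        have h1B : 1 ∈ {m : ℕ | 0 < m ∧ Int.fract ((m : ℝ) * α) < β} := by
          refine ⟨Nat.one_pos, ?_⟩
          rw [hfα]; linarith
        have hb1 : b = 1 := le_antisymm (Nat.sInf_le h1B) hb0
        have hsa : s = α := by
          show Int.fract ((b : ℝ) * α) = α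
          rw [hb1, hfα]
        rw [hsa]; linarith
  -- b ≠ d
  have hbd : b ≠ d := by
    intro h
    have h1 : 1 - β < s := by
      show 1 - β < Int.fract ((b : ℝ) * α)
      rw [h]; exact hdβ
    -- so 1 - β < s < β
    rcases lt_max_iff.mp hβmax with hc | hc
    · have h1D : 1 ∈ {m : ℕ | 0 < m ∧ 1 - β < Int.fract ((m : ℝ) * α)} := by
        refine ⟨Nat.one_pos, ?_⟩
        rw [hfα]; linarith
      have hd1 : d = 1 := le_antisymm (Nat.sInf_le h1D) hd0
      have hb1 : b = 1 := h.trans hd1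
      have h2 := hbβ
      rw [hb1, hfα] at h2
      linarith
    · have h1B : 1 ∈ {m : ℕ | 0 < m ∧ Int.fract ((m : ℝ) * α) < β} := by
        refine ⟨Nat.one_pos, ?_⟩
        rw [hfα]; linarith
      have hb1 : b = 1 := le_antisymm (Nat.sInf_le h1B) hb0
      have hd1 : d = 1 := h.symm.trans hb1
      have h2 := hdβ
      rw [hd1, hfα] at h2
      linarith
  -- fract ((b - d) α) = s + t
  have hfract : Int.fract (((b : ℝ) - (d : ℝ)) * α) = s + t := by
    have h1 : Int.fract (((b : ℝ) - (d : ℝ)) * α) = Int.fract (s + t - 1) := by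
      rw [Int.fract_eq_fract]
      refine ⟨⌊(b : ℝ) * α⌋ - ⌊(d : ℝ) * α⌋, ?_⟩
      have e1 : s = (b : ℝ) * α - ⌊(b : ℝ) * α⌋ := rfl
      have e3 : t = 1 - ((d : ℝ) * α - ⌊(d : ℝ) * α⌋) := rfl
      push_cast
      rw [e1, e3]; ring
    have h2 : Int.fract (s + t - 1) = Int.fract (s + t) := by
      rw [Int.fract_eq_fract]; exact ⟨-1, by push_cast; ring⟩
    have h3 : Int.fract (s + t) = s + t :=
      Int.fract_eq_self.mpr ⟨by linarith, hst1⟩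
    rw [h1, h2, h3]
  refine ⟨hbd, hfract, ?_⟩
  -- β ≤ s + t
  by_contra hlt
  push_neg at hlt
  rcases lt_or_gt_of_ne hbd with hbd' | hbd'
  · -- b < d : consider d - b
    have hmpos : 0 < d - b := Nat.sub_pos_of_lt hbd'
    have hcast : (((d - b : ℕ) : ℝ)) = (d : ℝ) - (b : ℝ) := by
      push_cast [Nat.cast_sub hbd'.le]; ring
    have hne : Int.fract (((b : ℝ) - (d : ℝ)) * α) ≠ 0 := by rw [hfract]; linarith
    have hval : Int.fract (((d - b : ℕ) : ℝ) * α) = 1 - (s + t) := by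
      rw [hcast, show ((d : ℝ) - (b : ℝ)) * α = -(((b : ℝ) - (d : ℝ)) * α) by ring,
        Int.fract_neg hne, hfract]
    have hmem : (d - b) ∈ {m : ℕ | 0 < m ∧ 1 - β < Int.fract ((m : ℝ) * α)} := by
      refine ⟨hmpos, ?_⟩
      rw [hval]; linarith
    have hle : d ≤ d - b := Nat.sInf_le hmem
    omega
  · -- d < b : consider b - d
    have hmpos : 0 < b - d := Nat.sub_pos_of_lt hbd'
    have hcast : (((b - d : ℕ) : ℝ)) = (b : ℝ) - (d : ℝ) := by
      push_cast [Nat.cast_sub hbd'.le]; ring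
    have hmem : (b - d) ∈ {m : ℕ | 0 < m ∧ Int.fract ((m : ℝ) * α) < β} := by
      refine ⟨hmpos, ?_⟩
      rw [hcast, hfract]; exact hlt
    have hle : b ≤ b - d := Nat.sInf_le hmem
    omega
end

section
/- In the three-gap setting with β < max(α, 1 − α), if i is a natural number with {iα} ∈ [0, β − s), then the gap after i equals b. -/
open Set

private lemma fract_add_eq (x y : ℝ) :
    Int.fract (x + y) = Int.fract (Int.fract x + Int.fract y) := by
  rw [Int.fract_eq_fract]
  exact ⟨⌊x⌋ + ⌊y⌋, by unfold Int.fract; push_cast; ring⟩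

private lemma exists_fract_lt (α : ℝ) (hirr : Irrational α) (β : ℝ)
    (hβ : β ∈ Set.Ioo (0 : ℝ) 1) : ∃ n : ℕ, 0 < n ∧ Int.fract ((n : ℝ) * α) < β := by
  obtain ⟨hβ0, hβ1⟩ := hβ
  have hdense : Dense ((AddSubgroup.closure {α, 1} : AddSubgroup ℝ) : Set ℝ) := by
    rcases AddSubgroup.dense_or_cyclic (AddSubgroup.closure {α, 1}) with h | ⟨a, ha⟩
    · exact h
    · exfalso
      have hαm : α ∈ AddSubgroup.closure ({α, 1} : Set ℝ) :=
        AddSubgroup.subset_closure (by simp)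
      have h1m : (1 : ℝ) ∈ AddSubgroup.closure ({α, 1} : Set ℝ) :=
        AddSubgroup.subset_closure (by simp)
      rw [ha, AddSubgroup.mem_closure_singleton] at hαm h1m
      obtain ⟨p, hp⟩ := hαm
      obtain ⟨q, hq⟩ := h1m
      have hq0 : q ≠ 0 := by rintro rfl; simp at hq
      have : (q : ℝ) * α = (p : ℝ) := by
        have : q • (p • a) = p • (q • a) := by rw [smul_comm]
        rw [hp, hq] at this
        simpa [zsmul_eq_mul] using this
      exact hirr ⟨(p : ℚ) / (q : ℚ), by
        push_cast
        field_simp at this ⊢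
        linarith [this]⟩
  obtain ⟨g, hgS, hg0, hgβ⟩ := hdense.exists_between hβ0
  rw [SetLike.mem_coe, AddSubgroup.mem_closure_pair] at hgS
  obtain ⟨m, k, hmk⟩ := hgS
  simp only [zsmul_eq_mul, mul_one] at hmk
  rcases lt_trichotomy m 0 with hm | hm | hm
  · -- m < 0 : fract ((-m) α) = 1 - g, iterate
    have hng : ((-m : ℤ) : ℝ) * α = (k : ℝ) - g := by push_cast; linarith [hmk]
    set j : ℕ := ⌊(1 - β) / g⌋₊ + 1 with hj
    refine ⟨j * (-m).toNat, ?_, ?_⟩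
    · have : 0 < (-m).toNat := (by omega)
      positivity
    · have hjg1 : (j : ℝ) * g > 1 - β := by
        have := Nat.lt_floor_add_one ((1 - β) / g)
        rw [div_lt_iff₀ hg0] at this
        push_cast [hj]
        linarith
      have hjg2 : (j : ℝ) * g < 1 := by
        have : ((⌊(1 - β) / g⌋₊ : ℝ)) ≤ (1 - β) / g := Nat.floor_le (div_nonneg (by linarith) hg0.le)
        rw [le_div_iff₀ hg0] at this
        push_cast [hj]
        nlinarith
      have hcast : ((j * (-m).toNat : ℕ) : ℝ) * α = (j : ℝ) * ((k : ℝ) - g) := by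
        have h1 : (((-m).toNat : ℤ) : ℝ) = ((-m : ℤ) : ℝ) := by
          norm_cast; omega
        push_cast
        rw [mul_assoc]
        rw [show ((-m).toNat : ℝ) * α = ((((-m).toNat : ℤ)) : ℝ) * α by norm_cast,
          h1, hng]
      rw [hcast]
      have hjg0 : 0 < (j : ℝ) * g := by positivity
      have hself : Int.fract ((j : ℝ) * g) = (j : ℝ) * g :=
        Int.fract_eq_self.mpr ⟨hjg0.le, hjg2⟩
      have : Int.fract ((j : ℝ) * ((k : ℝ) - g)) = 1 - (j : ℝ) * g := by
        have heq : (j : ℝ) * ((k : ℝ) - g) = ((j * k : ℤ) : ℝ) + (-(((j : ℝ)) * g)) := by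
          push_cast; ring
        rw [heq, Int.fract_intCast_add,
          Int.fract_neg (by rw [hself]; exact ne_of_gt hjg0), hself]
      rw [this]
      linarith
  · exfalso
    subst hm
    simp only [Int.cast_zero, zero_mul, zero_add] at hmk
    have : (1 : ℝ) ≤ k ∨ (k : ℝ) ≤ 0 := by
      rcases le_or_gt 1 k with h | h
      · left; exact_mod_cast h
      · right; exact_mod_cast (by omega : k ≤ 0)
    rcases this with h | h <;> linarith [hmk, hgβ, hg0]
  · refine ⟨m.toNat, (by omega), ?_⟩
    have : ((m.toNat : ℕ) : ℝ) * α = g - (k : ℝ) := by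
      have : ((m.toNat : ℝ)) = ((m : ℤ) : ℝ) := by norm_cast; omega
      rw [this]; push_cast; linarith [hmk]
    rw [this, show g - (k : ℝ) = g + ((-k : ℤ) : ℝ) by push_cast; ring,
      Int.fract_add_intCast, Int.fract_eq_self.mpr ⟨le_of_lt hg0, by linarith⟩]
    exact hgβ

/-- In the three-gap setting with `β < max(α, 1-α)`: if `{iα} ∈ [0, β - s)`,
then the gap after `i` equals `b`. -/
theorem three_gap_small_gap
    (α β : ℝ) (hα : α ∈ Set.Ioo (0 : ℝ) 1) (hirr : Irrational α)
    (hβ : β ∈ Set.Ioo (0 : ℝ) 1) (hβmax : β < max α (1 - α)) :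
    let gap : ℕ → ℕ := fun i => sInf {e : ℕ | 0 < e ∧ Int.fract (((i : ℝ) + (e : ℝ)) * α) < β}
    let b : ℕ := sInf {m : ℕ | 0 < m ∧ Int.fract ((m : ℝ) * α) < β}
    let s : ℝ := Int.fract ((b : ℝ) * α)
    ∀ i : ℕ, Int.fract ((i : ℝ) * α) ∈ Set.Ico (0 : ℝ) (β - s) → gap i = b := by
  intro gap b s i hi
  obtain ⟨hi0, hiβs⟩ := hi
  have hβ0 := hβ.1
  have hβ1 := hβ.2
  have hbne : {m : ℕ | 0 < m ∧ Int.fract ((m : ℝ) * α) < β}.Nonempty :=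
    exists_fract_lt α hirr β hβ
  have hbmem : b ∈ {m : ℕ | 0 < m ∧ Int.fract ((m : ℝ) * α) < β} := Nat.sInf_mem hbne
  obtain ⟨hb0, hsβ⟩ := hbmem
  have hs0 : (0 : ℝ) ≤ s := Int.fract_nonneg _
  have hx0 : (0 : ℝ) ≤ Int.fract ((i : ℝ) * α) := hi0
  -- b is in the gap set
  have hbgap : b ∈ {e : ℕ | 0 < e ∧ Int.fract (((i : ℝ) + (e : ℝ)) * α) < β} := by
    refine ⟨hb0, ?_⟩
    have h1 : ((i : ℝ) + (b : ℝ)) * α = (i : ℝ) * α + (b : ℝ) * α := by ring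
    rw [h1, fract_add_eq, Int.fract_eq_self.mpr ⟨by linarith, by linarith⟩]
    linarith
  -- no smaller element of the gap set
  have hmin : ∀ e : ℕ, 0 < e → e < b → ¬ Int.fract (((i : ℝ) + (e : ℝ)) * α) < β := by
    intro e he0 heb hlt
    set e' : ℕ := b - e with he'
    have he'0 : 0 < e' := by omega
    have he'b : e' < b := by omega
    have hu : β ≤ Int.fract ((e : ℝ) * α) := by
      have := Nat.notMem_of_lt_sInf (s := {m : ℕ | 0 < m ∧ Int.fract ((m : ℝ) * α) < β}) heb
      simp only [Set.mem_setOf_eq, not_and, not_lt] at this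
      exact this he0
    have hv : β ≤ Int.fract ((e' : ℝ) * α) := by
      have := Nat.notMem_of_lt_sInf (s := {m : ℕ | 0 < m ∧ Int.fract ((m : ℝ) * α) < β}) he'b
      simp only [Set.mem_setOf_eq, not_and, not_lt] at this
      exact this he'0
    set u : ℝ := Int.fract ((e : ℝ) * α)
    set v : ℝ := Int.fract ((e' : ℝ) * α)
    have hu1 : u < 1 := Int.fract_lt_one _
    have hv1 : v < 1 := Int.fract_lt_one _
    -- u + v = s + 1
    have hsum : u + v = s + 1 := by
      have hcast : (e : ℝ) * α + (e' : ℝ) * α = (b : ℝ) * α := by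
        have : ((e : ℕ) : ℝ) + ((e' : ℕ) : ℝ) = ((b : ℕ) : ℝ) := by
          push_cast
          have : e + e' = b := by omega
          exact_mod_cast congrArg (Nat.cast : ℕ → ℝ) this
        linear_combination this * α
      have h2 : Int.fract (u + v) = s := by
        rw [← fract_add_eq, hcast]
      by_cases hcase : u + v < 1
      · rw [Int.fract_eq_self.mpr ⟨by linarith, hcase⟩] at h2
        linarith
      · push_neg at hcase
        have : Int.fract (u + v) = u + v - 1 := by
          rw [show u + v = (u + v - 1) + ((1 : ℤ) : ℝ) by push_cast; ring,
            Int.fract_add_intCast, Int.fract_eq_self.mpr ⟨by linarith, by linarith⟩]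
          push_cast; ring
        linarith [h2, this]
    -- now analyze fract((i+e)α)
    set x : ℝ := Int.fract ((i : ℝ) * α)
    have h1 : ((i : ℝ) + (e : ℝ)) * α = (i : ℝ) * α + (e : ℝ) * α := by ring
    rw [h1, fract_add_eq] at hlt
    by_cases hcase : x + u < 1
    · rw [Int.fract_eq_self.mpr ⟨by linarith, hcase⟩] at hlt
      linarith
    · push_neg at hcase
      -- u ≥ 1 - x > 1 - β + s, but u = s + 1 - v ≤ s + 1 - β
      linarith
  -- conclude
  refine le_antisymm (Nat.sInf_le hbgap) ?_
  by_contra h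
  push_neg at h
  have hne : {e : ℕ | 0 < e ∧ Int.fract (((i : ℝ) + (e : ℝ)) * α) < β}.Nonempty := ⟨b, hbgap⟩
  obtain ⟨hg0, hgβ'⟩ := Nat.sInf_mem hne
  exact hmin _ hg0 h hgβ'
end

section
/- In the three-gap setting with β < max(α, 1 − α), if i is a natural number with {iα} ∈ [t, β), then the gap after i equals d. -/
open Set

/-- The subgroup generated by 1 and an irrational α is dense in ℝ. -/
lemma dense_one_alpha (α : ℝ) (hirr : Irrational α) :
    Dense ((AddSubgroup.closure ({1, α} : Set ℝ) : AddSubgroup ℝ) : Set ℝ) := by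
  rcases AddSubgroup.dense_or_cyclic (AddSubgroup.closure ({1, α} : Set ℝ)) with h | ⟨a, ha⟩
  · exact h
  · exfalso
    have h1 : (1 : ℝ) ∈ AddSubgroup.closure ({1, α} : Set ℝ) :=
      AddSubgroup.subset_closure (by simp)
    have h2 : α ∈ AddSubgroup.closure ({1, α} : Set ℝ) :=
      AddSubgroup.subset_closure (by simp)
    rw [ha, AddSubgroup.mem_closure_singleton] at h1 h2
    obtain ⟨p, hp⟩ := h1
    obtain ⟨q, hq⟩ := h2
    have hp0 : p ≠ 0 := by
      rintro rfl; simp at hp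
    have ha0 : a ≠ 0 := by
      rintro rfl; simp at hp
    have hpa : (p : ℝ) * a = 1 := by rw [← hp]; simp [zsmul_eq_mul]
    have hqa : (q : ℝ) * a = α := by rw [← hq]; simp [zsmul_eq_mul]
    have hpne : (p : ℝ) ≠ 0 := Int.cast_ne_zero.mpr hp0
    have hkey : α * p = q := by
      calc α * p = (q * a) * p := by rw [hqa]
        _ = q * (p * a) := by ring
        _ = q := by rw [hpa]; ring
    exact hirr ⟨(q : ℚ) / (p : ℚ), by
      push_cast
      exact ((eq_div_iff hpne).mpr hkey).symm⟩

/-- Existence: some positive multiple has fractional part above 1 - β. -/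
lemma exists_fract_gt (α β : ℝ) (hirr : Irrational α) (hβ : β ∈ Set.Ioo (0 : ℝ) 1) :
    ∃ m : ℕ, 0 < m ∧ 1 - β < Int.fract ((m : ℝ) * α) := by
  obtain ⟨hβ0, hβ1⟩ := hβ
  -- first find a positive k with fract (k α) ∈ (1-β, 1) ∪ (0, β)
  have key : ∃ k : ℕ, 0 < k ∧
      (1 - β < Int.fract ((k : ℝ) * α) ∨ Int.fract ((k : ℝ) * α) < β) := by
    obtain ⟨g, hgS, hg⟩ := (dense_one_alpha α hirr).exists_between
      (show 1 - β < 1 by linarith)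
    rw [SetLike.mem_coe, AddSubgroup.mem_closure_pair] at hgS
    obtain ⟨m, n, hmn⟩ := hgS
    have hg01 : g ∈ Set.Ico (0 : ℝ) 1 := ⟨by linarith [hg.1], hg.2⟩
    have hfg : Int.fract g = g := Int.fract_eq_self.mpr hg01
    have hfn : Int.fract ((n : ℝ) * α) = g := by
      have : (n : ℝ) * α = g + (-m : ℤ) := by
        push_cast
        rw [← hmn]; simp only [zsmul_eq_mul]; push_cast; ring
      rw [this, Int.fract_add_intCast, hfg]
    have hn0 : n ≠ 0 := by
      rintro rfl
      simp at hfn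
      linarith [hg.1]
    rcases lt_trichotomy n 0 with hn | hn | hn
    · refine ⟨(-n).toNat, by omega, ?_⟩
      right
      have hcast : ((((-n).toNat : ℕ) : ℝ)) = (-n : ℝ) := by
        have : ((-n).toNat : ℤ) = -n := Int.toNat_of_nonneg (by omega)
        exact_mod_cast congrArg (Int.cast : ℤ → ℝ) this
      rw [hcast]
      have : Int.fract (-((n : ℝ) * α)) = 1 - g := by
        rw [Int.fract_neg (by rw [hfn]; linarith [hg.1]), hfn]
      rw [show (-n : ℝ) * α = -((n : ℝ) * α) by ring, this]
      linarith [hg.1]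
    · omega
    · refine ⟨n.toNat, by omega, Or.inl ?_⟩
      have hcast : (((n.toNat : ℕ) : ℝ)) = (n : ℝ) := by
        have : (n.toNat : ℤ) = n := Int.toNat_of_nonneg (by omega)
        exact_mod_cast congrArg (Int.cast : ℤ → ℝ) this
      rw [hcast, hfn]; exact hg.1
  obtain ⟨k, hk0, hk⟩ := key
  rcases hk with hk | hk
  · exact ⟨k, hk0, hk⟩
  · -- boost: fract (k α) = ε ∈ (0, β); take least j with j ε > 1 - β
    set ε := Int.fract ((k : ℝ) * α) with hε
    have hε0 : 0 < ε := by
      rcases lt_or_eq_of_le (Int.fract_nonneg ((k : ℝ) * α)) with h | h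
      · exact h
      · exfalso
        have : Irrational ((k : ℝ) * α) := by
          have := hirr.natCast_mul (m := k) (by omega)
          simpa [mul_comm] using this
        have hz : ((k : ℝ) * α) = ⌊(k : ℝ) * α⌋ := by
          have := Int.self_sub_floor ((k : ℝ) * α)
          linarith [this, h, hε]
        exact this ⟨(⌊(k : ℝ) * α⌋ : ℚ), by push_cast; rw [← hz]⟩
    have hex : ∃ j : ℕ, 1 - β < (j : ℝ) * ε := by
      obtain ⟨j, hj⟩ := exists_nat_gt ((1 - β) / ε)
      exact ⟨j, by rw [div_lt_iff₀ hε0] at hj; linarith⟩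
    classical
    set j := Nat.find hex with hj
    have hjspec : 1 - β < (j : ℝ) * ε := Nat.find_spec hex
    have hj1 : 1 ≤ j := by
      by_contra h
      have : j = 0 := by omega
      rw [this] at hjspec; simp at hjspec; linarith
    have hjprev : ¬ (1 - β < ((j - 1 : ℕ) : ℝ) * ε) := Nat.find_min hex (by omega)
    push_neg at hjprev
    have hjle : (j : ℝ) * ε < 1 := by
      have : ((j - 1 : ℕ) : ℝ) = (j : ℝ) - 1 := by
        have : ((j - 1 : ℕ) : ℤ) = (j : ℤ) - 1 := by omega
        exact_mod_cast congrArg (Int.cast : ℤ → ℝ) this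
      rw [this] at hjprev
      nlinarith
    refine ⟨j * k, by positivity, ?_⟩
    have : ((j * k : ℕ) : ℝ) * α = (j : ℝ) * ε + (j * ⌊(k : ℝ) * α⌋ : ℤ) := by
      push_cast
      rw [hε]
      have := Int.self_sub_floor ((k : ℝ) * α)
      nlinarith [this]
    rw [this, Int.fract_add_intCast, Int.fract_eq_self.mpr ⟨by positivity, hjle⟩]
    exact hjspec

/-- In the three-gap setting with `β < max(α, 1-α)`: if `{iα} ∈ [t, β)`,
then the gap after `i` equals `d`. -/
theorem three_gap_other_gap
    (α β : ℝ) (hα : α ∈ Set.Ioo (0 : ℝ) 1) (hirr : Irrational α)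
    (hβ : β ∈ Set.Ioo (0 : ℝ) 1) (hβmax : β < max α (1 - α)) :
    let gap : ℕ → ℕ := fun i => sInf {e : ℕ | 0 < e ∧ Int.fract (((i : ℝ) + (e : ℝ)) * α) < β}
    let d : ℕ := sInf {m : ℕ | 0 < m ∧ 1 - β < Int.fract ((m : ℝ) * α)}
    let t : ℝ := 1 - Int.fract ((d : ℝ) * α)
    ∀ i : ℕ, Int.fract ((i : ℝ) * α) ∈ Set.Ico t β → gap i = d := by
  intro gap d t i hi
  obtain ⟨hβ0, hβ1⟩ := hβ
  have hDne : {m : ℕ | 0 < m ∧ 1 - β < Int.fract ((m : ℝ) * α)}.Nonempty :=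
    exists_fract_gt α β hirr ⟨hβ0, hβ1⟩
  have hd : 0 < d ∧ 1 - β < Int.fract ((d : ℝ) * α) := Nat.sInf_mem hDne
  set x := Int.fract ((i : ℝ) * α) with hx
  set y := Int.fract ((d : ℝ) * α) with hy
  have hy1 : y < 1 := Int.fract_lt_one _
  have hxt : 1 - y ≤ x := hi.1
  have hxβ : x < β := hi.2
  -- irrationality helper: fract (e α) > 0 for e > 0
  have fract_pos : ∀ e : ℕ, 0 < e → 0 < Int.fract ((e : ℝ) * α) := by
    intro e he
    rcases lt_or_eq_of_le (Int.fract_nonneg ((e : ℝ) * α)) with h | h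
    · exact h
    · exfalso
      have hirr' : Irrational ((e : ℝ) * α) := by
        have := hirr.natCast_mul (m := e) (by omega)
        simpa [mul_comm] using this
      have hz : ((e : ℝ) * α) = ⌊(e : ℝ) * α⌋ := by
        have := Int.self_sub_floor ((e : ℝ) * α)
        rw [← h] at this; linarith
      exact hirr' ⟨(⌊(e : ℝ) * α⌋ : ℚ), by push_cast; rw [← hz]⟩
  -- d is in the gap set for i
  have hdmem : d ∈ {e : ℕ | 0 < e ∧ Int.fract (((i : ℝ) + (e : ℝ)) * α) < β} := by
    refine ⟨hd.1, ?_⟩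
    have heq : ((i : ℝ) + (d : ℝ)) * α = (x + y - 1) + (⌊(i : ℝ) * α⌋ + ⌊(d : ℝ) * α⌋ + 1 : ℤ) := by
      push_cast
      have h1 := Int.self_sub_floor ((i : ℝ) * α)
      have h2 := Int.self_sub_floor ((d : ℝ) * α)
      rw [hx, hy]; nlinarith [h1, h2]
    rw [heq, Int.fract_add_intCast, Int.fract_eq_self.mpr ⟨by linarith, by linarith⟩]
    linarith
  -- minimality: every element of the gap set is ≥ d
  have hmin : ∀ e ∈ {e : ℕ | 0 < e ∧ Int.fract (((i : ℝ) + (e : ℝ)) * α) < β}, d ≤ e := by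
    rintro e ⟨he0, heβ⟩
    by_contra hlt
    push_neg at hlt
    set z := Int.fract ((e : ℝ) * α) with hz
    have hz0 : 0 < z := fract_pos e he0
    have hz1 : z < 1 := Int.fract_lt_one _
    have hznot : ¬ (1 - β < z) := by
      intro h
      have : d ≤ e := Nat.sInf_le
        (show e ∈ {m : ℕ | 0 < m ∧ 1 - β < Int.fract ((m : ℝ) * α)} from ⟨he0, h⟩)
      omega
    push_neg at hznot
    have heq2 : ((i : ℝ) + (e : ℝ)) * α = (x + z) + (⌊(i : ℝ) * α⌋ + ⌊(e : ℝ) * α⌋ : ℤ) := by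
      push_cast
      have h1 := Int.self_sub_floor ((i : ℝ) * α)
      have h2 := Int.self_sub_floor ((e : ℝ) * α)
      rw [hx, hz]; nlinarith [h1, h2]
    rcases le_or_gt 1 (x + z) with hcase | hcase
    · -- x + z ≥ 1 : fract = x + z - 1 ≤ x - β < 0, contradiction
      have : Int.fract (((i : ℝ) + (e : ℝ)) * α) = x + z - 1 := by
        rw [heq2, Int.fract_add_intCast]
        have : x + z = (x + z - 1) + (1 : ℤ) := by push_cast; ring
        rw [this, Int.fract_add_intCast,
          Int.fract_eq_self.mpr ⟨by linarith, by linarith [hxβ, hz1]⟩]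
        push_cast
        ring
      have hge := Int.fract_nonneg (((i : ℝ) + (e : ℝ)) * α)
      rw [this] at hge
      linarith
    · -- x + z < 1 : fract = x + z < β gives z < β - x ≤ β - 1 + y,
      -- so fract ((d-e) α) = y - z > 1 - β, contradicting minimality of d
      have hfr : Int.fract (((i : ℝ) + (e : ℝ)) * α) = x + z := by
        rw [heq2, Int.fract_add_intCast, Int.fract_eq_self.mpr ⟨by linarith, hcase⟩]
      rw [hfr] at heβ
      have hyz : 1 - β < y - z := by linarith
      have hde : 0 < d - e ∧ d - e < d := by omega
      have hcast : (((d - e : ℕ) : ℝ)) = (d : ℝ) - (e : ℝ) := by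
        have : ((d - e : ℕ) : ℤ) = (d : ℤ) - e := by omega
        exact_mod_cast congrArg (Int.cast : ℤ → ℝ) this
      have hfde : Int.fract (((d - e : ℕ) : ℝ) * α) = y - z := by
        have heq3 : ((d - e : ℕ) : ℝ) * α = (y - z) + (⌊(d : ℝ) * α⌋ - ⌊(e : ℝ) * α⌋ : ℤ) := by
          rw [hcast]
          push_cast
          have h1 := Int.self_sub_floor ((d : ℝ) * α)
          have h2 := Int.self_sub_floor ((e : ℝ) * α)
          rw [hy, hz]; nlinarith [h1, h2]
        rw [heq3, Int.fract_add_intCast,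
          Int.fract_eq_self.mpr ⟨by linarith, by linarith [hy1, hz0]⟩]
      have : d ≤ d - e := Nat.sInf_le
        (show d - e ∈ {m : ℕ | 0 < m ∧ 1 - β < Int.fract ((m : ℝ) * α)} from
          ⟨hde.1, by rw [hfde]; exact hyz⟩)
      omega
  have hGne : {e : ℕ | 0 < e ∧ Int.fract (((i : ℝ) + (e : ℝ)) * α) < β}.Nonempty := ⟨d, hdmem⟩
  exact le_antisymm (Nat.sInf_le hdmem) (hmin _ (Nat.sInf_mem hGne))
end

section
/- In the three-gap setting with β < max(α, 1 − α), if i is a natural number with {iα} ∈ [β − s, t), then the gap after i equals b + d. -/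
private lemma irr_nat_mul {α : ℝ} (hirr : Irrational α) {k : ℕ} (hk : 0 < k) :
    Irrational ((k : ℝ) * α) := hirr.natCast_mul hk.ne'

private lemma fract_pos' {α : ℝ} (hirr : Irrational α) {k : ℕ} (hk : 0 < k) :
    0 < Int.fract ((k : ℝ) * α) := by
  rcases (Int.fract_nonneg ((k : ℝ) * α)).lt_or_eq with h | h
  · exact h
  · exfalso
    have h0 : (k : ℝ) * α - (⌊(k : ℝ) * α⌋ : ℝ) = 0 := by
      rw [Int.self_sub_floor]; exact h.symm
    exact (irr_nat_mul hirr hk).ne_int ⌊(k : ℝ) * α⌋ (by linarith)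

private lemma fract_irr {α : ℝ} (hirr : Irrational α) {k : ℕ} (hk : 0 < k) :
    Irrational (Int.fract ((k : ℝ) * α)) := by
  rw [← Int.self_sub_floor]
  exact (irr_nat_mul hirr hk).sub_intCast _

/-- From a multiple with small fractional part, produce one with fractional part near 1. -/
private lemma exists_large_of_small {α c : ℝ} (hirr : Irrational α) {k : ℕ} (hk : 0 < k)
    (h : Int.fract ((k : ℝ) * α) < c) :
    ∃ m : ℕ, 0 < m ∧ 1 - c < Int.fract ((m : ℝ) * α) := by
  set u := Int.fract ((k : ℝ) * α) with hu
  have hu0 : 0 < u := fract_pos' hirr hk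
  have hu1 : u < 1 := Int.fract_lt_one _
  have huirr : Irrational u := fract_irr hirr hk
  set j : ℕ := ⌊1 / u⌋.toNat with hj
  have hfl : (1 : ℤ) ≤ ⌊1 / u⌋ := Int.le_floor.mpr (by
    push_cast; exact (one_lt_one_div hu0 hu1).le)
  have hj1 : 1 ≤ j := by omega
  have hjc : (j : ℝ) = (⌊1 / u⌋ : ℝ) := by
    rw [hj]; exact_mod_cast congrArg (fun z : ℤ => (z : ℝ)) (Int.toNat_of_nonneg (by omega))
  have hjle : (j : ℝ) ≤ 1 / u := by rw [hjc]; exact Int.floor_le _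
  have hgt' : 1 / u < (j : ℝ) + 1 := by rw [hjc]; exact Int.lt_floor_add_one _
  have hlt : (j : ℝ) * u < 1 := by
    have hle : (j : ℝ) * u ≤ 1 := by
      calc (j : ℝ) * u ≤ (1 / u) * u := by
            exact mul_le_mul_of_nonneg_right hjle hu0.le
        _ = 1 := by field_simp
    rcases hle.lt_or_eq with h' | h'
    · exact h'
    · exact absurd h' ((huirr.natCast_mul (by omega : j ≠ 0)).ne_int 1 ∘ by
        intro hh; exact_mod_cast hh)
  have hbig : 1 - u < (j : ℝ) * u := by
    have : 1 < ((j : ℝ) + 1) * u := by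
      calc 1 = (1 / u) * u := by field_simp
        _ < ((j : ℝ) + 1) * u := by exact mul_lt_mul_of_pos_right hgt' hu0
    nlinarith
  refine ⟨j * k, by positivity, ?_⟩
  have hfr : Int.fract (((j * k : ℕ) : ℝ) * α) = (j : ℝ) * u := by
    rw [Int.fract_eq_iff]
    refine ⟨by positivity, hlt, ⟨(j : ℤ) * ⌊(k : ℝ) * α⌋, ?_⟩⟩
    have hud : u = (k : ℝ) * α - (⌊(k : ℝ) * α⌋ : ℝ) := (Int.self_sub_floor _).symm
    push_cast
    rw [hud]; ring
  rw [hfr]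
  linarith

/-- From a multiple with fractional part near 1, produce one with small fractional part. -/
private lemma exists_small_of_large {α c : ℝ} (hirr : Irrational α) {k : ℕ} (hk : 0 < k)
    (h : 1 - c < Int.fract ((k : ℝ) * α)) :
    ∃ m : ℕ, 0 < m ∧ Int.fract ((m : ℝ) * α) < c := by
  set u := 1 - Int.fract ((k : ℝ) * α) with hu
  have hu0 : 0 < u := by have := Int.fract_lt_one ((k : ℝ) * α); simp [hu]; linarith
  have hu1 : u < c := by simp [hu]; linarith
  have hu1' : u < 1 := by have := fract_pos' hirr hk; simp [hu]; linarith
  have huirr : Irrational u := by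
    have h1 : Irrational ((1 : ℤ) - Int.fract ((k : ℝ) * α)) :=
      (fract_irr hirr hk).intCast_sub 1
    simpa using h1
  set j : ℕ := ⌊1 / u⌋.toNat with hj
  have hfl : (1 : ℤ) ≤ ⌊1 / u⌋ := Int.le_floor.mpr (by
    push_cast; exact (one_lt_one_div hu0 hu1').le)
  have hj1 : 1 ≤ j := by omega
  have hjc : (j : ℝ) = (⌊1 / u⌋ : ℝ) := by
    rw [hj]; exact_mod_cast congrArg (fun z : ℤ => (z : ℝ)) (Int.toNat_of_nonneg (by omega))
  have hjle : (j : ℝ) ≤ 1 / u := by rw [hjc]; exact Int.floor_le _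
  have hgt' : 1 / u < (j : ℝ) + 1 := by rw [hjc]; exact Int.lt_floor_add_one _
  have hlt : (j : ℝ) * u < 1 := by
    have hle : (j : ℝ) * u ≤ 1 := by
      calc (j : ℝ) * u ≤ (1 / u) * u := mul_le_mul_of_nonneg_right hjle hu0.le
        _ = 1 := by field_simp
    rcases hle.lt_or_eq with h' | h'
    · exact h'
    · exact absurd h' ((huirr.natCast_mul (by omega : j ≠ 0)).ne_int 1 ∘ by
        intro hh; exact_mod_cast hh)
  have hbig : 1 - u < (j : ℝ) * u := by
    have : 1 < ((j : ℝ) + 1) * u := by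
      calc 1 = (1 / u) * u := by field_simp
        _ < ((j : ℝ) + 1) * u := mul_lt_mul_of_pos_right hgt' hu0
    nlinarith
  refine ⟨j * k, by positivity, ?_⟩
  have hfr : Int.fract (((j * k : ℕ) : ℝ) * α) = 1 - (j : ℝ) * u := by
    rw [Int.fract_eq_iff]
    refine ⟨by linarith, by nlinarith, ⟨(j : ℤ) * ⌊(k : ℝ) * α⌋ + (j : ℤ) - 1, ?_⟩⟩
    have hud : Int.fract ((k : ℝ) * α) = (k : ℝ) * α - (⌊(k : ℝ) * α⌋ : ℝ) :=
      (Int.self_sub_floor _).symm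
    have hu' : u = 1 - ((k : ℝ) * α - (⌊(k : ℝ) * α⌋ : ℝ)) := by rw [hu, hud]
    push_cast
    rw [hu']; ring
  rw [hfr]
  linarith

/-- Both the `b`-set and the `d`-set are nonempty. -/
private lemma sets_nonempty {α β : ℝ} (hirr : Irrational α) (hβ0 : 0 < β) (hβ1 : β < 1) :
    (∃ m : ℕ, 0 < m ∧ Int.fract ((m : ℝ) * α) < β) ∧
      (∃ m : ℕ, 0 < m ∧ 1 - β < Int.fract ((m : ℝ) * α)) := by
  have hd : Dense ((AddSubgroup.closure ({1, α} : Set ℝ) : AddSubgroup ℝ) : Set ℝ) := by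
    rcases (AddSubgroup.closure ({1, α} : Set ℝ)).dense_or_cyclic with h | ⟨a, ha⟩
    · exact h
    · exfalso
      have h1 : (1 : ℝ) ∈ AddSubgroup.closure ({a} : Set ℝ) := by
        rw [← ha]; exact AddSubgroup.subset_closure (by simp)
      have h2 : α ∈ AddSubgroup.closure ({a} : Set ℝ) := by
        rw [← ha]; exact AddSubgroup.subset_closure (by simp)
      rw [AddSubgroup.mem_closure_singleton] at h1 h2
      obtain ⟨n, hn⟩ := h1
      obtain ⟨m, hm⟩ := h2
      have hn0 : n ≠ 0 := by rintro rfl; simp at hn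
      have hcalc : (n : ℝ) * α = (m : ℝ) := by
        rw [zsmul_eq_mul] at hn hm
        calc (n : ℝ) * α = (n : ℝ) * ((m : ℝ) * a) := by rw [hm]
          _ = (m : ℝ) * ((n : ℝ) * a) := by ring
          _ = (m : ℝ) * 1 := by rw [hn]
          _ = (m : ℝ) := by ring
      exact (hirr.intCast_mul hn0).ne_int m hcalc
  obtain ⟨z, hzS, hz0, hzβ⟩ := by
    have := hd.exists_mem_open isOpen_Ioo (⟨β / 2, by constructor <;> linarith⟩ :
      (Set.Ioo (0 : ℝ) β).Nonempty)
    exact this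
  rw [SetLike.mem_coe, AddSubgroup.mem_closure_pair] at hzS
  obtain ⟨n, m, hnm⟩ := hzS
  rw [zsmul_eq_mul, zsmul_eq_mul, mul_one] at hnm
  have hz1 : z < 1 := lt_of_lt_of_le hzβ hβ1.le
  have hm0 : m ≠ 0 := by
    rintro rfl
    simp at hnm
    have : (0 : ℝ) < (n : ℝ) := hnm ▸ hz0
    have : z < 1 := hz1
    have h1 : (0 : ℤ) < n := by exact_mod_cast hnm ▸ hz0
    have h2 : (n : ℝ) < 1 := hnm ▸ hz1
    have : (1 : ℤ) ≤ n := h1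
    have : (1 : ℝ) ≤ (n : ℝ) := by exact_mod_cast this
    linarith
  rcases hm0.lt_or_gt with hm | hm
  · -- m < 0 : fract((-m) α) = 1 - z, near 1
    set k : ℕ := (-m).toNat with hk
    have hkpos : 0 < k := by omega
    have hkc : (k : ℝ) = -(m : ℝ) := by
      rw [hk]
      have : ((-m).toNat : ℤ) = -m := Int.toNat_of_nonneg (by omega)
      exact_mod_cast congrArg (fun z : ℤ => (z : ℝ)) this
    have hfr : Int.fract ((k : ℝ) * α) = 1 - z := by
      rw [Int.fract_eq_iff]
      refine ⟨by linarith, by linarith, ⟨n - 1, ?_⟩⟩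
      have : (m : ℝ) * α = z - n := by linarith [hnm]
      rw [hkc]
      push_cast
      linarith [this]
    have hdwit : 1 - β < Int.fract ((k : ℝ) * α) := by rw [hfr]; linarith
    exact ⟨exists_small_of_large hirr hkpos hdwit, k, hkpos, hdwit⟩
  · -- m > 0 : fract(m α) = z, small
    set k : ℕ := m.toNat with hk
    have hkpos : 0 < k := by omega
    have hkc : (k : ℝ) = (m : ℝ) := by
      rw [hk]
      have : (m.toNat : ℤ) = m := Int.toNat_of_nonneg (by omega)
      exact_mod_cast congrArg (fun z : ℤ => (z : ℝ)) this
    have hfr : Int.fract ((k : ℝ) * α) = z := by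
      rw [Int.fract_eq_iff]
      refine ⟨hz0.le, hz1, ⟨-n, ?_⟩⟩
      rw [hkc]
      push_cast
      linarith [hnm]
    have hbwit : Int.fract ((k : ℝ) * α) < β := by rw [hfr]; exact hzβ
    exact ⟨⟨k, hkpos, hbwit⟩, exists_large_of_small hirr hkpos hbwit⟩

/-- In the three-gap setting with `β < max(α, 1-α)`: if `{iα} ∈ [β - s, t)`,
then the gap after `i` equals `b + d`. -/
theorem three_gap_sum_gap
    (α β : ℝ) (hα : α ∈ Set.Ioo (0 : ℝ) 1) (hirr : Irrational α)
    (hβ : β ∈ Set.Ioo (0 : ℝ) 1) (hβmax : β < max α (1 - α)) :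
    let gap : ℕ → ℕ := fun i => sInf {e : ℕ | 0 < e ∧ Int.fract (((i : ℝ) + (e : ℝ)) * α) < β}
    let b : ℕ := sInf {m : ℕ | 0 < m ∧ Int.fract ((m : ℝ) * α) < β}
    let d : ℕ := sInf {m : ℕ | 0 < m ∧ 1 - β < Int.fract ((m : ℝ) * α)}
    let s : ℝ := Int.fract ((b : ℝ) * α)
    let t : ℝ := 1 - Int.fract ((d : ℝ) * α)
    ∀ i : ℕ, Int.fract ((i : ℝ) * α) ∈ Set.Ico (β - s) t → gap i = b + d := by
  intro gap b d s t i hi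
  obtain ⟨hβ0, hβ1⟩ := hβ
  obtain ⟨hBne, hDne⟩ := sets_nonempty hirr hβ0 hβ1
  have hb : 0 < b ∧ Int.fract ((b : ℝ) * α) < β := Nat.sInf_mem hBne
  have hdm : 0 < d ∧ 1 - β < Int.fract ((d : ℝ) * α) := Nat.sInf_mem hDne
  have hbmin : ∀ m : ℕ, 0 < m → Int.fract ((m : ℝ) * α) < β → b ≤ m :=
    fun m h1 h2 => Nat.sInf_le ⟨h1, h2⟩
  have hdmin : ∀ m : ℕ, 0 < m → 1 - β < Int.fract ((m : ℝ) * α) → d ≤ m :=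
    fun m h1 h2 => Nat.sInf_le ⟨h1, h2⟩
  set x : ℝ := Int.fract ((i : ℝ) * α) with hxdef
  have hs : s = Int.fract ((b : ℝ) * α) := rfl
  have ht : t = 1 - Int.fract ((d : ℝ) * α) := rfl
  have hs0 : 0 < s := fract_pos' hirr hb.1
  have hsβ : s < β := hb.2
  have ht0 : 0 < t := by rw [ht]; linarith [Int.fract_lt_one ((d : ℝ) * α)]
  have htβ : t < β := by rw [ht]; linarith [hdm.2]
  have hx : β - s ≤ x := hi.1
  have hxt : x < t := hi.2
  have hx0 : 0 ≤ x := Int.fract_nonneg _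
  -- floor decompositions
  have hxe : x = (i : ℝ) * α - (⌊(i : ℝ) * α⌋ : ℝ) := (Int.self_sub_floor _).symm
  have hse : s = (b : ℝ) * α - (⌊(b : ℝ) * α⌋ : ℝ) := (Int.self_sub_floor _).symm
  have hte : t = 1 - ((d : ℝ) * α - (⌊(d : ℝ) * α⌋ : ℝ)) := by
    rw [ht]; rw [Int.self_sub_floor]
  -- membership of b + d
  have hmem : Int.fract (((i : ℝ) + ((b + d : ℕ) : ℝ)) * α) = x + s - t := by
    rw [Int.fract_eq_iff]
    refine ⟨by linarith, by linarith, ⟨⌊(i : ℝ) * α⌋ + ⌊(b : ℝ) * α⌋ + ⌊(d : ℝ) * α⌋ + 1, ?_⟩⟩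
    push_cast
    rw [hxe, hse, hte]
    ring
  have hmemβ : Int.fract (((i : ℝ) + ((b + d : ℕ) : ℝ)) * α) < β := by
    rw [hmem]; linarith
  show sInf {e : ℕ | 0 < e ∧ Int.fract (((i : ℝ) + (e : ℝ)) * α) < β} = b + d
  apply le_antisymm
  · exact Nat.sInf_le ⟨by omega, hmemβ⟩
  · refine le_csInf ⟨b + d, ⟨by omega, hmemβ⟩⟩ ?_
    rintro e ⟨he0, heβ⟩
    set y : ℝ := Int.fract ((e : ℝ) * α) with hydef
    have hy0 : 0 < y := fract_pos' hirr he0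
    have hy1 : y < 1 := Int.fract_lt_one _
    have hye : y = (e : ℝ) * α - (⌊(e : ℝ) * α⌋ : ℝ) := (Int.self_sub_floor _).symm
    have hne1 : x + y ≠ 1 := by
      intro h1
      have hcalc : ((i + e : ℕ) : ℝ) * α = ((⌊(i : ℝ) * α⌋ + ⌊(e : ℝ) * α⌋ + 1 : ℤ) : ℝ) := by
        push_cast
        rw [hxe, hye] at h1
        linarith
      exact (irr_nat_mul hirr (by omega : 0 < i + e)).ne_int _ hcalc
    have hx1 : x < 1 := Int.fract_lt_one _
    rcases hne1.lt_or_gt with hcase | hcase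
    · -- x + y < 1
      have h1 : Int.fract (((i : ℝ) + (e : ℝ)) * α) = x + y := by
        rw [Int.fract_eq_iff]
        refine ⟨by linarith, hcase, ⟨⌊(i : ℝ) * α⌋ + ⌊(e : ℝ) * α⌋, ?_⟩⟩
        push_cast
        rw [hxe, hye]
        ring
      have hxyβ : x + y < β := h1 ▸ heβ
      have hys : y < s := by linarith
      have hbe : b ≤ e := hbmin e he0 (by linarith)
      have hbe' : b < e := by
        rcases hbe.lt_or_eq with h | h
        · exact h
        · exfalso
          have hys' : y = s := by rw [hydef, hs, h]
          linarith
      have hfe : Int.fract (((e - b : ℕ) : ℝ) * α) = y - s + 1 := by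
        rw [Int.fract_eq_iff]
        refine ⟨by linarith, by linarith, ⟨⌊(e : ℝ) * α⌋ - ⌊(b : ℝ) * α⌋ - 1, ?_⟩⟩
        rw [Nat.cast_sub hbe]
        push_cast
        rw [hye, hse]
        ring
      have hd_le : d ≤ e - b := by
        apply hdmin _ (by omega)
        rw [hfe]; linarith
      omega
    · -- x + y > 1
      have hfd : Int.fract ((d : ℝ) * α) = 1 - t := by rw [ht]; ring
      have hyd : Int.fract ((d : ℝ) * α) < y := by rw [hfd]; linarith
      have hde : d ≤ e := hdmin e he0 (by linarith [hdm.2, hfd])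
      have hde' : d < e := by
        rcases hde.lt_or_eq with h | h
        · exact h
        · exfalso
          have hyd' : Int.fract ((d : ℝ) * α) = y := by rw [hydef, h]
          linarith
      have hfe : Int.fract (((e - d : ℕ) : ℝ) * α) = y + t - 1 := by
        rw [Int.fract_eq_iff]
        refine ⟨by linarith [hyd, hfd], by linarith, ⟨⌊(e : ℝ) * α⌋ - ⌊(d : ℝ) * α⌋, ?_⟩⟩
        rw [Nat.cast_sub hde]
        push_cast
        rw [hye, hte]
        ring
      have hb_le : b ≤ e - d := by
        apply hbmin _ (by omega)
        rw [hfe]; linarith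
      omega
end
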